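/- arXiv:2105.13115 — 7 statements merged into one kernel-verified Lean document; each statement's English description precedes it below -/
import Mathlib

section
/- Let f : ℂˣ → ℂˣ be a group homomorphism for which there exist a natural number N and a polynomial P ∈ ℂ[X, Y] in two variables such that f(z) = P(z, conj z) · (z · conj z)^(−N) for all z ∈ ℂˣ. Then f is a monomial character: there exist integers p and q such that f(z) = z^p · (conj z)^q for all z ∈ ℂˣ. -/
open Complex

/-- The monomial character `z ↦ z^p * (conj z)^q` as a monoid hom `ℂˣ →* ℂ`. -/
noncomputable def chiChar (p q : ℤ) : ℂˣ →* ℂ where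
  toFun z := (z : ℂ) ^ p * ((starRingEnd ℂ) (z : ℂ)) ^ q
  map_one' := by simp
  map_mul' a b := by
    simp only [Units.val_mul, map_mul, mul_zpow]
    ring

theorem polynomial_character_is_monomial (f : ℂˣ →* ℂˣ)
    (halg : ∃ (N : ℕ) (P : MvPolynomial (Fin 2) ℂ),
      ∀ z : ℂˣ, ((f z : ℂˣ) : ℂ) =
        MvPolynomial.eval ![(z : ℂ), (starRingEnd ℂ) (z : ℂ)] P *
          ((z : ℂ) * (starRingEnd ℂ) (z : ℂ)) ^ (-(N : ℤ))) :
    ∃ p q : ℤ, ∀ z : ℂˣ,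
      ((f z : ℂˣ) : ℂ) = (z : ℂ) ^ p * ((starRingEnd ℂ) (z : ℂ)) ^ q := by
  classical
  obtain ⟨N, P, hP⟩ := halg
  set F : ℂˣ →* ℂ := (Units.coeHom ℂ).comp f with hF
  -- F equals a finite linear combination of monomial characters
  have key : ∀ z : ℂˣ, F z =
      ∑ m ∈ P.support, (MvPolynomial.coeff m P) •
        chiChar ((m 0 : ℤ) - N) ((m 1 : ℤ) - N) z := by
    intro z
    have hz : (z : ℂ) ≠ 0 := z.ne_zero
    have hzc : (starRingEnd ℂ) (z : ℂ) ≠ 0 := by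
      simp [hz]
    have : F z = MvPolynomial.eval ![(z : ℂ), (starRingEnd ℂ) (z : ℂ)] P *
        ((z : ℂ) * (starRingEnd ℂ) (z : ℂ)) ^ (-(N : ℤ)) := hP z
    rw [this, MvPolynomial.eval_eq', Finset.sum_mul]
    refine Finset.sum_congr rfl fun m _ => ?_
    simp only [chiChar, MonoidHom.coe_mk, OneHom.coe_mk, smul_eq_mul,
      Fin.prod_univ_two, Matrix.cons_val_zero, Matrix.cons_val_one, Matrix.head_cons]
    rw [zpow_sub₀ hz, zpow_sub₀ hzc, mul_zpow, zpow_natCast, zpow_natCast]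
    field_simp
    simp only [zpow_neg, zpow_natCast]
    field_simp
  -- Use Dedekind linear independence of characters
  have li := linearIndependent_monoidHom ℂˣ ℂ
  rw [linearIndependent_iff] at li
  set l : (ℂˣ →* ℂ) →₀ ℂ :=
    (∑ m ∈ P.support, Finsupp.single (chiChar ((m 0 : ℤ) - N) ((m 1 : ℤ) - N))
        (MvPolynomial.coeff m P)) - Finsupp.single F 1 with hl
  have hcomb : Finsupp.linearCombination ℂ (fun g : ℂˣ →* ℂ => (g : ℂˣ → ℂ)) l = 0 := by
    rw [hl, map_sub, map_sum]
    simp only [Finsupp.linearCombination_single, one_smul]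
    funext z
    simp only [Pi.sub_apply, Finset.sum_apply, Pi.smul_apply, Pi.zero_apply]
    rw [sub_eq_zero]
    exact (key z).symm
  have hl0 : l = 0 := li l hcomb
  -- evaluate at F
  by_cases hmem : ∃ m ∈ P.support,
      chiChar ((m 0 : ℤ) - N) ((m 1 : ℤ) - N) = F
  · obtain ⟨m, _, hm⟩ := hmem
    refine ⟨(m 0 : ℤ) - N, (m 1 : ℤ) - N, fun z => ?_⟩
    have := DFunLike.congr_fun hm z
    simpa [chiChar, F] using this.symm
  · exfalso
    push_neg at hmem
    have : l F = -1 := by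
      rw [hl]
      simp only [Finsupp.sub_apply, Finsupp.single_eq_same]
      rw [Finset.sum_apply']
      rw [Finset.sum_eq_zero, zero_sub]
      intro m hm
      rw [Finsupp.single_apply, if_neg (hmem m hm)]
    rw [hl0] at this
    simp at this
end

section
/- Let V be a finite-dimensional complex vector space, σ an antilinear involution on V, n a natural number, and F^0 ⊇ F^1 ⊇ ⋯ ⊇ F^n ⊇ F^{n+1} a descending chain of complex subspaces with F^0 = V and F^{n+1} = {0}, such that for every p with 0 ≤ p ≤ n + 1 one has F^p ∩ σ(F^{n+1−p}) = {0} and F^p + σ(F^{n+1−p}) = V. Define H^p = F^p ∩ σ(F^{n−p}) for 0 ≤ p ≤ n. Then V is the internal direct sum of H^0, …, H^n, σ(H^p) = H^{n−p} for all p, and F^p = H^n + H^{n−1} + ⋯ + H^p for all 0 ≤ p ≤ n. In other words, a Hodge filtration opposed to its conjugate determines a Hodge decomposition, so the filtration and decomposition definitions of a pure weight-n Hodge structure are equivalent. -/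
/-- The Hodge summand `H^p = F^p ∩ σ(F^{n-p})` associated to a filtration `F` and a
real structure `σ`. -/
def hodgeSummand {V : Type*} [AddCommGroup V] [Module ℂ V] {n : ℕ}
    (σ : V → V) (F : ℕ → Submodule ℂ V) (p : Fin (n + 1)) : Set V :=
  (F (p : ℕ) : Set V) ∩ σ '' (F (n - (p : ℕ)) : Set V)

theorem opposed_filtration_gives_hodge_decomposition
    (V : Type*) [AddCommGroup V] [Module ℂ V] [FiniteDimensional ℂ V]
    (σ : V → V)
    (hσadd : ∀ x y : V, σ (x + y) = σ x + σ y)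
    (hσsmul : ∀ (c : ℂ) (v : V), σ (c • v) = (starRingEnd ℂ c) • σ v)
    (hσinv : ∀ v : V, σ (σ v) = v)
    (n : ℕ) (F : ℕ → Submodule ℂ V)
    (hdesc : ∀ p : ℕ, F (p + 1) ≤ F p)
    (hF0 : F 0 = ⊤) (hFend : F (n + 1) = ⊥)
    (hopp : ∀ p : ℕ, p ≤ n + 1 →
      ((F p : Set V) ∩ σ '' (F (n + 1 - p) : Set V) = {0}) ∧
      (∀ v : V, ∃ x ∈ F p, ∃ y ∈ F (n + 1 - p), v = x + σ y)) :
    (∀ v : V, ∃! c : Fin (n + 1) → V,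
        (∀ p : Fin (n + 1), c p ∈ hodgeSummand σ F p) ∧ v = ∑ p, c p) ∧
    (∀ p : Fin (n + 1), σ '' hodgeSummand σ F p = hodgeSummand σ F p.rev) ∧
    (∀ p : ℕ, p ≤ n → (F p : Set V) =
      {v : V | ∃ c : Fin (n + 1) → V,
        (∀ r : Fin (n + 1), c r ∈ hodgeSummand σ F r) ∧
        (∀ r : Fin (n + 1), (r : ℕ) < p → c r = 0) ∧ v = ∑ r, c r}) := by
  classical
  -- σ as a semilinear map
  set σL : V →ₛₗ[starRingEnd ℂ] V :=
    { toFun := σ, map_add' := hσadd, map_smul' := hσsmul } with hσL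
  set G : ℕ → Submodule ℂ V := fun m => Submodule.map σL (F m) with hGdef
  have hGset : ∀ m, (σ '' (F m : Set V)) = ↑(G m) := fun m => rfl
  set H : Fin (n + 1) → Submodule ℂ V := fun p => F (p : ℕ) ⊓ G (n - (p : ℕ)) with hHdef
  have hHset : ∀ p, hodgeSummand σ F p = ↑(H p) := by
    intro p
    rw [hodgeSummand, hGset, hHdef]
    exact Submodule.coe_inf.symm
  have Fanti : Antitone F := antitone_nat_of_succ_le hdesc
  -- disjointness key
  have key2 : ∀ p : ℕ, p ≤ n → F (p + 1) ⊓ G (n - p) = ⊥ := by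
    intro p hp
    have h := (hopp (p + 1) (by omega)).1
    rw [Nat.succ_sub_succ] at h
    rw [eq_bot_iff]
    intro x hx
    rw [Submodule.mem_inf] at hx
    have : x ∈ ((F (p + 1) : Set V) ∩ σ '' (F (n - p) : Set V)) := by
      refine ⟨hx.1, ?_⟩
      rw [hGset]
      exact hx.2
    rw [h] at this
    simpa using this
  -- existence of decomposition of elements of F p
  have decomp : ∀ k p : ℕ, p + k = n + 1 → ∀ v ∈ F p,
      ∃ c : Fin (n + 1) → V, (∀ r, c r ∈ H r) ∧
        (∀ r : Fin (n + 1), (r : ℕ) < p → c r = 0) ∧ v = ∑ r, c r := by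
    intro k
    induction k with
    | zero =>
      intro p hp v hv
      have hpn : p = n + 1 := by omega
      subst hpn
      rw [hFend, Submodule.mem_bot] at hv
      exact ⟨0, fun r => (H r).zero_mem, fun r _ => rfl, by simp [hv]⟩
    | succ k ih =>
      intro p hp v hv
      have hpn : p ≤ n := by omega
      obtain ⟨x, hx, y, hy, hxy⟩ := (hopp (p + 1) (by omega)).2 v
      rw [Nat.succ_sub_succ] at hy
      have hσyG : σ y ∈ G (n - p) := ⟨y, hy, rfl⟩
      have hσyF : σ y ∈ F p := by
        have : σ y = v - x := by rw [hxy]; abel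
        rw [this]
        exact sub_mem hv (hdesc p hx)
      set pF : Fin (n + 1) := ⟨p, by omega⟩ with hpF
      have hσyH : σ y ∈ H pF := Submodule.mem_inf.mpr ⟨hσyF, hσyG⟩
      obtain ⟨c, hc1, hc2, hc3⟩ := ih (p + 1) (by omega) x hx
      have hcp0 : c pF = 0 := hc2 pF (by simp [hpF])
      refine ⟨Function.update c pF (σ y), ?_, ?_, ?_⟩
      · intro r
        rcases eq_or_ne r pF with h | h
        · rw [h, Function.update_self]; exact hσyH
        · rw [Function.update_of_ne h]; exact hc1 r
      · intro r hr
        have hne : r ≠ pF := by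
          intro h
          rw [h] at hr
          simp [hpF] at hr
        rw [Function.update_of_ne hne]
        exact hc2 r (by omega)
      · rw [Finset.sum_update_of_mem (Finset.mem_univ _),
          Finset.sdiff_singleton_eq_erase, Finset.sum_erase _ hcp0, ← hc3, hxy]
        abel
  -- sum zero implies all zero
  have zero_of_sum : ∀ c : Fin (n + 1) → V, (∀ r, c r ∈ H r) →
      ∑ r, c r = 0 → ∀ r, c r = 0 := by
    intro c hc hsum
    have main : ∀ k : ℕ, ∀ r : Fin (n + 1), (r : ℕ) < k → c r = 0 := by
      intro k
      induction k with
      | zero => intro r hr; omega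
      | succ k ih =>
        intro r hr
        rcases Nat.lt_or_ge (r : ℕ) k with h | h
        · exact ih r h
        have hrk : (r : ℕ) = k := by omega
        have hkn : k ≤ n := by omega
        -- c r ∈ F (k+1)
        have hsum' : c r = -∑ s ∈ Finset.univ.erase r, c s := by
          have h0 := Finset.add_sum_erase Finset.univ c (Finset.mem_univ r)
          rw [hsum] at h0
          exact eq_neg_of_add_eq_zero_left h0
        have hmem : c r ∈ F (k + 1) := by
          rw [hsum']
          refine neg_mem (Submodule.sum_mem _ ?_)
          intro s hs
          have hsne : s ≠ r := Finset.ne_of_mem_erase hs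
          rcases Nat.lt_or_ge (s : ℕ) (k + 1) with h' | h'
          · have hslt : (s : ℕ) < k := by
              rcases Nat.lt_or_ge (s : ℕ) k with h'' | h''
              · exact h''
              · exfalso; exact hsne (Fin.ext (by omega))
            rw [ih s hslt]
            exact zero_mem _
          · exact Fanti h' ((hc s).1)
        have hmemG : c r ∈ G (n - k) := by
          have := (hc r).2
          rwa [hrk] at this
        have : c r ∈ F (k + 1) ⊓ G (n - k) := Submodule.mem_inf.mpr ⟨hmem, hmemG⟩
        rw [key2 k hkn] at this
        simpa using this
    intro r
    exact main (n + 1) r r.isLt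
  have σbij : Function.Bijective σ :=
    Function.bijective_iff_has_inverse.mpr ⟨σ, hσinv, hσinv⟩
  refine ⟨?_, ?_, ?_⟩
  · -- unique decomposition
    intro v
    obtain ⟨c, hc1, hc2, hc3⟩ := decomp (n + 1) 0 (by omega) v (by rw [hF0]; trivial)
    refine ⟨c, ⟨fun p => by rw [hHset]; exact hc1 p, hc3⟩, ?_⟩
    intro c' ⟨hc'1, hc'2⟩
    have hd : ∀ r, c' r - c r ∈ H r := by
      intro r
      have h1 : c' r ∈ H r := by rw [← SetLike.mem_coe, ← hHset]; exact hc'1 r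
      exact sub_mem h1 (hc1 r)
    have hdsum : ∑ r, (c' r - c r) = 0 := by
      rw [Finset.sum_sub_distrib, ← hc'2, ← hc3, sub_self]
    funext r
    exact sub_eq_zero.mp (zero_of_sum _ hd hdsum r)
  · -- σ swaps summands
    intro p
    have hval : ((p.rev : Fin (n + 1)) : ℕ) = n - (p : ℕ) := by
      rw [Fin.val_rev]
      omega
    have hple : (p : ℕ) ≤ n := Nat.lt_succ_iff.mp p.isLt
    have hval2 : n - (n - (p : ℕ)) = (p : ℕ) := by omega
    simp only [hodgeSummand, hval, hval2]
    rw [Set.image_inter σbij.injective]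
    have himim : σ '' (σ '' (F (n - (p : ℕ)) : Set V)) = (F (n - (p : ℕ)) : Set V) := by
      rw [Set.image_image]
      simp [hσinv]
    rw [himim, Set.inter_comm]
  · -- filtration recovered
    intro p hp
    ext v
    simp only [Set.mem_setOf_eq, SetLike.mem_coe]
    constructor
    · intro hv
      obtain ⟨c, hc1, hc2, hc3⟩ := decomp (n + 1 - p) p (by omega) v hv
      exact ⟨c, fun r => by rw [hHset]; exact hc1 r, hc2, hc3⟩
    · rintro ⟨c, hc1, hc2, rfl⟩
      refine Submodule.sum_mem _ ?_
      intro r _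
      rcases Nat.lt_or_ge (r : ℕ) p with h | h
      · rw [hc2 r h]; exact zero_mem _
      · have h1 : c r ∈ H r := by rw [← SetLike.mem_coe, ← hHset]; exact hc1 r
        exact Fanti h ((Submodule.mem_inf.mp h1).1)
end

section
/- Let V be a finite-dimensional complex vector space, σ an antilinear involution on V, k an integer, and h : ℂˣ → GL(V) an algebraic representation such that σ ∘ h(z) = h(z) ∘ σ for all z ∈ ℂˣ, and h(t) = t^k • id for every positive real number t. Then V is the internal direct sum of the weight spaces V^{p,q} over all pairs of integers (p, q) with p + q = k (only finitely many of which are nonzero), and σ(V^{p,q}) = V^{q,p} for all such p, q. That is, every algebraic representation of ℂˣ of weight k commuting with the real structure determines a pure Hodge decomposition of weight k. -/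
/-- The weight space `V^{p,q} = {v | h(z) v = z^p (conj z)^q • v for all z}` of a
representation `h : ℂˣ → GL(V)`. -/
noncomputable def weightSpace {V : Type*} [AddCommGroup V] [Module ℂ V]
    (h : ℂˣ →* (V →ₗ[ℂ] V)ˣ) (p q : ℤ) : Submodule ℂ V :=
  ⨅ z : ℂˣ, Module.End.eigenspace ((h z : V →ₗ[ℂ] V))
    ((z : ℂ) ^ p * (starRingEnd ℂ (z : ℂ)) ^ q)

/-- A representation `h : ℂˣ → GL(V)` is algebraic if in some basis its matrix entries
are polynomials in `z`, `conj z` and `(z * conj z)⁻¹`. -/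
def IsAlgebraicRep {V : Type*} [AddCommGroup V] [Module ℂ V]
    (h : ℂˣ →* (V →ₗ[ℂ] V)ˣ) : Prop :=
  ∃ (n : ℕ) (b : Module.Basis (Fin n) ℂ V) (N : ℕ) (P : Fin n → Fin n → MvPolynomial (Fin 2) ℂ),
    ∀ (z : ℂˣ) (i j : Fin n),
      LinearMap.toMatrix b b ((h z : V →ₗ[ℂ] V)) i j =
        MvPolynomial.eval ![(z : ℂ), (starRingEnd ℂ) (z : ℂ)] (P i j) *
          ((z : ℂ) * (starRingEnd ℂ) (z : ℂ)) ^ (-(N : ℤ))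


open Finset Polynomial in
lemma laurent_indep_scalar (S : Finset ℤ) (g : ℤ → ℂ) (U : Set ℂ)
    (hU : U.Infinite) (h0 : ∀ u ∈ U, u ≠ 0)
    (hv : ∀ u ∈ U, ∑ m ∈ S, g m * u ^ m = 0) :
    ∀ m ∈ S, g m = 0 := by
  intro m₀ hm₀
  have hSne : S.Nonempty := ⟨m₀, hm₀⟩
  set M : ℤ := S.min' hSne with hM
  have hle : ∀ m ∈ S, M ≤ m := fun m hm => S.min'_le m hm
  set p : Polynomial ℂ := ∑ m ∈ S, Polynomial.C (g m) * Polynomial.X ^ (m - M).toNat with hp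
  have hroot : ∀ u ∈ U, p.IsRoot u := by
    intro u hu
    have hune := h0 u hu
    have : p.eval u = (∑ m ∈ S, g m * u ^ m) * (u ^ M)⁻¹ := by
      rw [hp, Polynomial.eval_finset_sum, Finset.sum_mul]
      refine Finset.sum_congr rfl fun m hm => ?_
      rw [Polynomial.eval_mul, Polynomial.eval_C, Polynomial.eval_pow, Polynomial.eval_X]
      rw [mul_assoc]
      congr 1
      rw [← zpow_natCast u (m - M).toNat, Int.toNat_of_nonneg (sub_nonneg.2 (hle m hm)),
        zpow_sub₀ hune, div_eq_mul_inv]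
    rw [Polynomial.IsRoot, this, hv u hu, zero_mul]
  have hp0 : p = 0 := by
    apply Polynomial.eq_zero_of_infinite_isRoot
    exact hU.mono fun u hu => hroot u hu
  have : p.coeff ((m₀ - M).toNat) = g m₀ := by
    rw [hp, Polynomial.finset_sum_coeff]
    rw [Finset.sum_eq_single m₀]
    · simp
    · intro m hm hne
      rw [Polynomial.coeff_C_mul, Polynomial.coeff_X_pow, if_neg, mul_zero]
      have h1 := hle m hm; have h2 := hle m₀ hm₀
      omega
    · intro habs; exact absurd hm₀ habs
  rw [hp0] at this
  simpa using this.symm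

lemma laurent_indep_mod {M : Type*} [AddCommGroup M] [Module ℂ M]
    (S : Finset ℤ) (g : ℤ → M) (U : Set ℂ)
    (hU : U.Infinite) (h0 : ∀ u ∈ U, u ≠ 0)
    (hv : ∀ u ∈ U, ∑ m ∈ S, u ^ m • g m = 0) :
    ∀ m ∈ S, g m = 0 := by
  intro m hm
  rw [← Module.forall_dual_apply_eq_zero_iff ℂ]
  intro φ
  refine laurent_indep_scalar S (fun m => φ (g m)) U hU h0 (fun u hu => ?_) m hm
  have := congrArg φ (hv u hu)
  rw [map_sum, map_zero] at this
  rw [← this]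
  exact Finset.sum_congr rfl fun m _ => by rw [map_smul, smul_eq_mul, mul_comm]

/-- The unit circle as a subset of ℂ. -/
def circSet : Set ℂ := {u | u * (starRingEnd ℂ) u = 1}

lemma circSet_ne_zero {u : ℂ} (hu : u ∈ circSet) : u ≠ 0 := by
  intro h; rw [circSet, Set.mem_setOf_eq, h] at hu; simp at hu

lemma circSet_infinite : circSet.Infinite := by
  have hmem : ∀ s : ℝ, (((1 - s^2)/(1+s^2) : ℝ) : ℂ) + ((2*s/(1+s^2) : ℝ) : ℂ) * Complex.I ∈ circSet := by
    intro s
    have hd : (1 : ℝ) + s^2 ≠ 0 := by positivity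
    have : ((((1 - s^2)/(1+s^2))^2 + (2*s/(1+s^2))^2 : ℝ) : ℂ) = 1 := by
      norm_cast
      field_simp
      ring
    rw [circSet, Set.mem_setOf_eq]
    set a : ℝ := (1 - s^2)/(1+s^2)
    set c : ℝ := 2*s/(1+s^2)
    rw [map_add, map_mul, Complex.conj_ofReal, Complex.conj_ofReal, Complex.conj_I]
    push_cast at this ⊢
    ring_nf
    ring_nf at this
    rw [Complex.I_sq]
    linear_combination this
  apply Set.infinite_of_injOn_mapsTo (s := Set.Ici (0:ℝ))
    (f := fun s => (((1 - s^2)/(1+s^2) : ℝ) : ℂ) + ((2*s/(1+s^2) : ℝ) : ℂ) * Complex.I)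
  · intro s hs t ht heq
    simp only at heq
    have hre := congrArg Complex.re heq
    simp only [Complex.add_re, Complex.mul_re, Complex.I_re, Complex.I_im,
      Complex.ofReal_re, Complex.ofReal_im] at hre
    ring_nf at hre
    have hds : (1 : ℝ) + s^2 ≠ 0 := by positivity
    have hdt : (1 : ℝ) + t^2 ≠ 0 := by positivity
    have h2 : (1 - s^2) * (1 + t^2) = (1 - t^2) * (1 + s^2) := by
      field_simp at hre
      nlinarith [hre, sq_nonneg (1+s^2), sq_nonneg (1+t^2), hds, hdt, sq_nonneg s, sq_nonneg t, mul_pos (by positivity : (0:ℝ) < 1+s^2) (by positivity : (0:ℝ) < 1+t^2)]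

    have hs0 : (0:ℝ) ≤ s := hs
    have ht0 : (0:ℝ) ≤ t := ht
    nlinarith [sq_nonneg (s - t), sq_nonneg (s + t)]
  · intro s _; exact hmem s
  · exact Set.Ici_infinite 0

/-- positive reals inside ℂ -/
def posSet : Set ℂ := {x | ∃ t : ℝ, 0 < t ∧ x = (t : ℂ)}

lemma posSet_ne_zero {u : ℂ} (hu : u ∈ posSet) : u ≠ 0 := by
  obtain ⟨t, ht, rfl⟩ := hu
  simpa using ne_of_gt ht

lemma posSet_infinite : posSet.Infinite := by
  apply Set.infinite_of_injOn_mapsTo (s := Set.Ioi (0:ℝ)) (f := fun t => (t : ℂ))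
  · exact fun s _ t _ h => Complex.ofReal_injective h
  · intro t ht; exact ⟨t, ht, rfl⟩
  · exact Set.Ioi_infinite 0

open Finset in
open Classical in
lemma char2_indep {M : Type*} [AddCommGroup M] [Module ℂ M]
    (T : Finset (ℤ × ℤ)) (g : ℤ × ℤ → M)
    (hv : ∀ z : ℂˣ, ∑ pq ∈ T, ((z : ℂ) ^ pq.1 * (starRingEnd ℂ (z : ℂ)) ^ pq.2) • g pq = 0) :
    ∀ pq ∈ T, g pq = 0 := by
  -- substitute z = t * u with t > 0 real, u on circle
  have key : ∀ u ∈ circSet, ∀ x ∈ posSet,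
      ∑ pq ∈ T, (x ^ (pq.1 + pq.2) * u ^ (pq.1 - pq.2)) • g pq = 0 := by
    intro u hu x hx
    have hu0 := circSet_ne_zero hu
    have hx0 := posSet_ne_zero hx
    obtain ⟨t, ht, rfl⟩ := hx
    have hz0 : (t : ℂ) * u ≠ 0 := mul_ne_zero hx0 hu0
    have := hv (Units.mk0 _ hz0)
    rw [← this]
    refine Finset.sum_congr rfl fun pq _ => ?_
    congr 1
    have hconj : (starRingEnd ℂ) ((t : ℂ) * u) = (t : ℂ) * u⁻¹ := by
      rw [map_mul, Complex.conj_ofReal]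
      congr 1
      have hu' : u * (starRingEnd ℂ) u = 1 := hu
      field_simp [hu0]
      linear_combination hu'
    show ((t:ℂ))^(pq.1+pq.2) * u ^ (pq.1-pq.2) = ((t:ℂ)*u)^pq.1 * ((starRingEnd ℂ) ((t:ℂ)*u))^pq.2
    rw [hconj, mul_zpow, mul_zpow, zpow_add₀ hx0, zpow_sub₀ hu0, inv_zpow]
    rw [div_eq_mul_inv]
    ring
  -- step 1: fix t, vary u: fiber sums over m = p - q vanish
  have step1 : ∀ m ∈ T.image (fun pq => pq.1 - pq.2), ∀ x ∈ posSet,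
      ∑ pq ∈ T.filter (fun pq => pq.1 - pq.2 = m), x ^ (pq.1 + pq.2) • g pq = 0 := by
    intro m hm x hx
    refine laurent_indep_mod (T.image (fun pq => pq.1 - pq.2))
      (fun m => ∑ pq ∈ T.filter (fun pq => pq.1 - pq.2 = m), x ^ (pq.1 + pq.2) • g pq)
      circSet circSet_infinite (fun u hu => circSet_ne_zero hu) (fun u hu => ?_) m hm
    rw [← key u hu x hx]
    rw [← Finset.sum_fiberwise_of_maps_to (g := fun pq => pq.1 - pq.2)
      (fun pq hpq => Finset.mem_image_of_mem _ hpq)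
      (fun pq => (x ^ (pq.1 + pq.2) * u ^ (pq.1 - pq.2)) • g pq)]
    refine Finset.sum_congr rfl fun m' _ => ?_
    rw [Finset.smul_sum]
    refine Finset.sum_congr rfl fun pq hpq => ?_
    rw [smul_smul]
    congr 1
    rw [(Finset.mem_filter.1 hpq).2, mul_comm]
  -- step 2: fix m, vary t
  intro pq₀ hpq₀
  have hm₀ : pq₀.1 - pq₀.2 ∈ T.image (fun pq => pq.1 - pq.2) := Finset.mem_image_of_mem _ hpq₀
  set F : Finset (ℤ×ℤ) := T.filter (fun pq => pq.1 - pq.2 = pq₀.1 - pq₀.2) with hF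
  have step2 : ∀ j ∈ F.image (fun pq => pq.1 + pq.2),
      ∑ pq ∈ F.filter (fun pq => pq.1 + pq.2 = j), g pq = 0 := by
    intro j hj
    refine laurent_indep_mod (F.image (fun pq => pq.1 + pq.2))
      (fun j => ∑ pq ∈ F.filter (fun pq => pq.1 + pq.2 = j), g pq)
      posSet posSet_infinite (fun u hu => posSet_ne_zero hu) (fun x hx => ?_) j hj
    rw [← step1 _ hm₀ x hx]
    rw [← Finset.sum_fiberwise_of_maps_to (g := fun pq => pq.1 + pq.2)
      (fun pq hpq => Finset.mem_image_of_mem _ hpq)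
      (fun pq => x ^ (pq.1 + pq.2) • g pq)]
    refine Finset.sum_congr rfl fun j' _ => ?_
    rw [Finset.smul_sum]
    refine Finset.sum_congr rfl fun pq hpq => ?_
    rw [(Finset.mem_filter.1 hpq).2]
  have := step2 (pq₀.1 + pq₀.2) (Finset.mem_image_of_mem _ (Finset.mem_filter.2 ⟨hpq₀, rfl⟩))
  rw [← this]
  symm
  apply Finset.sum_eq_single_of_mem pq₀
  · exact Finset.mem_filter.2 ⟨Finset.mem_filter.2 ⟨hpq₀, rfl⟩, rfl⟩
  · intro pq hpq hne
    exfalso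
    apply hne
    have h1 := Finset.mem_filter.1 hpq
    have h2 := Finset.mem_filter.1 h1.1
    have := h1.2; have := h2.2
    ext <;> omega


open Finset in
lemma expansion_exists {V : Type*} [AddCommGroup V] [Module ℂ V]
    (h : ℂˣ →* (V →ₗ[ℂ] V)ˣ)
    (halg : IsAlgebraicRep h) :
    ∃ (T : Finset (ℤ × ℤ)) (A : ℤ × ℤ → (V →ₗ[ℂ] V)),
      (∀ pq, pq ∉ T → A pq = 0) ∧
      ∀ z : ℂˣ, (h z : V →ₗ[ℂ] V) =
        ∑ pq ∈ T, ((z : ℂ) ^ pq.1 * (starRingEnd ℂ (z : ℂ)) ^ pq.2) • A pq := by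
  classical
  obtain ⟨n, b, N, P, hP⟩ := halg
  set D : ℕ := Finset.sup Finset.univ (fun ij : Fin n × Fin n => (P ij.1 ij.2).totalDegree) with hD
  set T : Finset (ℤ × ℤ) := Finset.Icc (-(N:ℤ)) D ×ˢ Finset.Icc (-(N:ℤ)) D with hT
  set φ : (Fin 2 →₀ ℕ) → ℤ × ℤ := fun s => ((s 0 : ℤ) - N, (s 1 : ℤ) - N) with hφ
  set cM : ℤ × ℤ → Matrix (Fin n) (Fin n) ℂ :=
    fun pq i j => ∑ s ∈ (P i j).support.filter (fun s => φ s = pq), (P i j).coeff s with hcM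
  -- basic bound facts
  have hmem : ∀ (i j : Fin n), ∀ s ∈ (P i j).support, φ s ∈ T := by
    intro i j s hs
    have h0 : s 0 + s 1 ≤ D := by
      have h1 : (s.sum fun _ e => e) ≤ (P i j).totalDegree := MvPolynomial.le_totalDegree hs
      have h2 : (s.sum fun _ e => e) = s 0 + s 1 := by
        rw [Finsupp.sum_fintype _ _ (fun _ => rfl), Fin.sum_univ_two]
      have h3 : (P i j).totalDegree ≤ D := Finset.le_sup (f := fun ij : Fin n × Fin n => (P ij.1 ij.2).totalDegree) (Finset.mem_univ (i, j))
      omega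
    simp only [hT, Finset.mem_product, Finset.mem_Icc, hφ]
    omega
  refine ⟨T, fun pq => Matrix.toLin b b (cM pq), ?_, ?_⟩
  · intro pq hpq
    have : cM pq = 0 := by
      ext i j
      rw [hcM]
      simp only
      rw [Finset.filter_false_of_mem, Finset.sum_empty]
      · rfl
      intro s hs hfs
      exact hpq (hfs ▸ hmem i j s hs)
    show Matrix.toLin b b (cM pq) = 0
    rw [this, map_zero]
  · intro z
    have hz0 : (z : ℂ) ≠ 0 := z.ne_zero
    have hzc0 : (starRingEnd ℂ) (z : ℂ) ≠ 0 := by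
      simp [hz0]
    -- entrywise identity
    have hentry : ∀ i j, (LinearMap.toMatrix b b ((h z : V →ₗ[ℂ] V))) i j =
        ∑ pq ∈ T, ((z : ℂ) ^ pq.1 * (starRingEnd ℂ (z : ℂ)) ^ pq.2) * cM pq i j := by
      intro i j
      rw [hP z i j]
      rw [MvPolynomial.eval_eq']
      rw [Finset.sum_mul]
      rw [← Finset.sum_fiberwise_of_maps_to (g := φ) (hmem i j)
        (fun s => (P i j).coeff s * (∏ l, (![(z : ℂ), (starRingEnd ℂ) (z : ℂ)]) l ^ s l) *
          ((z : ℂ) * (starRingEnd ℂ) (z : ℂ)) ^ (-(N : ℤ)))]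
      refine Finset.sum_congr rfl fun pq _ => ?_
      rw [hcM]
      simp only
      rw [Finset.mul_sum]
      refine Finset.sum_congr rfl fun s hs => ?_
      obtain ⟨hs1, hs2⟩ := Finset.mem_filter.1 hs
      rw [Fin.prod_univ_two]
      simp only [Matrix.cons_val_zero, Matrix.cons_val_one, Matrix.head_cons]
      have hpq1 : pq.1 = (s 0 : ℤ) - N := by rw [← hs2]
      have hpq2 : pq.2 = (s 1 : ℤ) - N := by rw [← hs2]
      rw [hpq1, hpq2]
      rw [mul_zpow, zpow_neg, zpow_neg, zpow_sub₀ hz0, zpow_sub₀ hzc0,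
        zpow_natCast, zpow_natCast, zpow_natCast, zpow_natCast]
      field_simp
    -- assemble
    have hmat : LinearMap.toMatrix b b ((h z : V →ₗ[ℂ] V)) =
        ∑ pq ∈ T, ((z : ℂ) ^ pq.1 * (starRingEnd ℂ (z : ℂ)) ^ pq.2) • cM pq := by
      ext i j
      rw [hentry i j]
      rw [Matrix.sum_apply]
      rfl
    calc (h z : V →ₗ[ℂ] V) = Matrix.toLin b b (LinearMap.toMatrix b b ((h z : V →ₗ[ℂ] V))) := by
          rw [Matrix.toLin_toMatrix]
      _ = _ := by
          rw [hmat, map_sum]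
          refine Finset.sum_congr rfl fun pq _ => ?_
          rw [map_smul]

open Finset in
theorem algebraic_rep_weight_k_gives_hodge_decomposition
    (V : Type*) [AddCommGroup V] [Module ℂ V] [FiniteDimensional ℂ V]
    (σ : V → V)
    (hσadd : ∀ x y : V, σ (x + y) = σ x + σ y)
    (hσsmul : ∀ (c : ℂ) (v : V), σ (c • v) = (starRingEnd ℂ c) • σ v)
    (hσinv : ∀ v : V, σ (σ v) = v)
    (k : ℤ) (h : ℂˣ →* (V →ₗ[ℂ] V)ˣ)
    (halg : IsAlgebraicRep h)
    (hcomm : ∀ (z : ℂˣ) (v : V), σ ((h z : V →ₗ[ℂ] V) v) = (h z : V →ₗ[ℂ] V) (σ v))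
    (hreal : ∀ (z : ℂˣ) (t : ℝ), 0 < t → (z : ℂ) = (t : ℂ) →
      (h z : V →ₗ[ℂ] V) = ((t : ℂ) ^ k) • LinearMap.id) :
    iSupIndep (fun p : ℤ => weightSpace h p (k - p)) ∧
    (⨆ p : ℤ, weightSpace h p (k - p)) = ⊤ ∧
    Set.Finite {p : ℤ | weightSpace h p (k - p) ≠ ⊥} ∧
    (∀ p q : ℤ, p + q = k →
      σ '' (weightSpace h p q : Set V) = (weightSpace h q p : Set V)) := by
  classical
  obtain ⟨T, A, hA0, hexp⟩ := expansion_exists h halg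
  set χ : ℤ × ℤ → ℂˣ → ℂ := fun pq z => (z : ℂ) ^ pq.1 * (starRingEnd ℂ (z : ℂ)) ^ pq.2 with hχ
  -- membership in weight spaces
  have hmemWS : ∀ (p q : ℤ) (v : V), v ∈ weightSpace h p q ↔
      ∀ z : ℂˣ, (h z : V →ₗ[ℂ] V) v = ((z : ℂ) ^ p * (starRingEnd ℂ (z : ℂ)) ^ q) • v := by
    intro p q v
    rw [weightSpace, Submodule.mem_iInf]
    exact forall_congr' fun z => Module.End.mem_eigenspace_iff
  -- orthogonality on T
  have horthT : ∀ pq ∈ T, ∀ cd ∈ T, A pq * A cd = if cd = pq then A pq else 0 := by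
    have step : ∀ w : ℂˣ, ∀ pq ∈ T,
        χ pq w • A pq - ∑ cd ∈ T, χ cd w • (A pq * A cd) = 0 := by
      intro w
      refine char2_indep T (fun pq => χ pq w • A pq - ∑ cd ∈ T, χ cd w • (A pq * A cd)) ?_
      intro z
      have h1 : (h (z * w) : V →ₗ[ℂ] V) = (h z : V →ₗ[ℂ] V) * (h w : V →ₗ[ℂ] V) := by
        rw [map_mul]; rfl
      rw [hexp (z * w), hexp z, hexp w] at h1
      have h2 : ∀ pq : ℤ × ℤ, χ pq (z * w) = χ pq z * χ pq w := by
        intro pq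
        simp only [hχ, Units.val_mul, map_mul, mul_zpow]
        ring
      rw [Finset.sum_mul] at h1
      have h3 : ∑ pq ∈ T, χ pq z • (χ pq w • A pq) =
          ∑ pq ∈ T, χ pq z • (∑ cd ∈ T, χ cd w • (A pq * A cd)) := by
        calc ∑ pq ∈ T, χ pq z • (χ pq w • A pq)
            = ∑ pq ∈ T, χ pq (z * w) • A pq := by
              refine Finset.sum_congr rfl fun pq _ => ?_
              rw [h2]
              exact (mul_smul _ _ _).symm
          _ = ∑ pq ∈ T, (χ pq z • A pq) * (∑ cd ∈ T, χ cd w • A cd) := h1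
          _ = ∑ pq ∈ T, χ pq z • (∑ cd ∈ T, χ cd w • (A pq * A cd)) := by
              refine Finset.sum_congr rfl fun pq _ => ?_
              rw [Finset.mul_sum, Finset.smul_sum]
              refine Finset.sum_congr rfl fun cd _ => ?_
              rw [smul_mul_assoc, mul_smul_comm]
      show ∑ pq ∈ T, χ pq z • (χ pq w • A pq - ∑ cd ∈ T, χ cd w • (A pq * A cd)) = 0
      have h4 : ∑ pq ∈ T, χ pq z • (χ pq w • A pq - ∑ cd ∈ T, χ cd w • (A pq * A cd)) =
          (∑ pq ∈ T, χ pq z • (χ pq w • A pq))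
            - ∑ pq ∈ T, χ pq z • (∑ cd ∈ T, χ cd w • (A pq * A cd)) := by
        rw [← Finset.sum_sub_distrib]
        exact Finset.sum_congr rfl fun pq _ => smul_sub _ _ _
      rw [h4, h3, sub_self]
    intro pq hpq cd hcd
    have step2 : ∀ w : ℂˣ,
        ∑ cd ∈ T, χ cd w • ((if cd = pq then A pq else 0) - A pq * A cd) = 0 := by
      intro w
      have e1 : ∑ cd ∈ T, χ cd w • (if cd = pq then A pq else 0) = χ pq w • A pq := by
        have : ∀ cd ∈ T, χ cd w • (if cd = pq then A pq else 0) =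
            (if cd = pq then χ cd w • A pq else 0) := by
          intro cd _; split <;> simp
        rw [Finset.sum_congr rfl this, Finset.sum_ite_eq' T pq (fun cd => χ cd w • A pq),
          if_pos hpq]
      calc ∑ cd ∈ T, χ cd w • ((if cd = pq then A pq else 0) - A pq * A cd)
          = (∑ cd ∈ T, χ cd w • (if cd = pq then A pq else 0))
            - ∑ cd ∈ T, χ cd w • (A pq * A cd) := by
            rw [← Finset.sum_sub_distrib]
            exact Finset.sum_congr rfl fun c _ => smul_sub _ _ _
        _ = χ pq w • A pq - ∑ cd ∈ T, χ cd w • (A pq * A cd) := by rw [e1]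
        _ = 0 := step w pq hpq
    have := char2_indep T (fun cd => (if cd = pq then A pq else 0) - A pq * A cd) step2 cd hcd
    rw [sub_eq_zero] at this
    exact this.symm
  -- global orthogonality
  have horth : ∀ pq cd, A pq * A cd = if cd = pq then A pq else 0 := by
    intro pq cd
    by_cases hpq : pq ∈ T
    · by_cases hcd : cd ∈ T
      · exact horthT pq hpq cd hcd
      · by_cases he : cd = pq
        · exact absurd hpq (he ▸ hcd)
        · simp [hA0 cd hcd, he]
    · by_cases he : cd = pq
      · simp [hA0 pq hpq, he]
      · simp [hA0 pq hpq, he]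
  have hidem : ∀ pq, A pq * A pq = A pq := by
    intro pq; rw [horth pq pq, if_pos rfl]
  -- positive real constraints
  have hdiag : (∑ pq ∈ T.filter (fun pq => pq.1 + pq.2 = k), A pq = 1) ∧
      (∀ pq ∈ T, pq.1 + pq.2 ≠ k → A pq = 0) := by
    set S' : Finset ℤ := insert k (T.image (fun pq => pq.1 + pq.2)) with hS'
    set G : ℤ → (V →ₗ[ℂ] V) := fun j =>
      (∑ pq ∈ T.filter (fun pq => pq.1 + pq.2 = j), A pq) - (if j = k then 1 else 0) with hG
    have hvan : ∀ x ∈ posSet, ∑ j ∈ S', x ^ j • G j = 0 := by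
      intro x hx
      obtain ⟨t, ht, rfl⟩ := hx
      have ht0 : (t : ℂ) ≠ 0 := posSet_ne_zero ⟨t, ht, rfl⟩
      have hu : (h (Units.mk0 (t : ℂ) ht0) : V →ₗ[ℂ] V) = ((t : ℂ) ^ k) • LinearMap.id :=
        hreal _ t ht rfl
      rw [hexp] at hu
      have hchar : ∀ pq : ℤ × ℤ, χ pq (Units.mk0 (t : ℂ) ht0) = (t : ℂ) ^ (pq.1 + pq.2) := by
        intro pq
        simp only [hχ, Units.val_mk0, Complex.conj_ofReal]
        rw [zpow_add₀ ht0]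
      have e1 : ∑ j ∈ S', (t : ℂ) ^ j • (∑ pq ∈ T.filter (fun pq => pq.1 + pq.2 = j), A pq) =
          ((t : ℂ) ^ k) • LinearMap.id := by
        rw [← hu]
        rw [← Finset.sum_fiberwise_of_maps_to (g := fun pq : ℤ × ℤ => pq.1 + pq.2)
          (fun pq hpq => Finset.mem_insert_of_mem (Finset.mem_image_of_mem _ hpq))
          (fun pq => χ pq (Units.mk0 (t : ℂ) ht0) • A pq)]
        refine Finset.sum_congr rfl fun j _ => ?_
        rw [Finset.smul_sum]
        refine Finset.sum_congr rfl fun pq hpq => ?_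
        rw [hchar, (Finset.mem_filter.1 hpq).2]
      have e2 : ∑ j ∈ S', (t : ℂ) ^ j • (if j = k then (1 : V →ₗ[ℂ] V) else 0) =
          ((t : ℂ) ^ k) • LinearMap.id := by
        have : ∀ j ∈ S', (t : ℂ) ^ j • (if j = k then (1 : V →ₗ[ℂ] V) else 0) =
            (if j = k then (t : ℂ) ^ j • (LinearMap.id : V →ₗ[ℂ] V) else 0) := by
          intro j _; split <;> simp [*]
          rfl
        rw [Finset.sum_congr rfl this,
          Finset.sum_ite_eq' S' k (fun j => (t : ℂ) ^ j • (LinearMap.id : V →ₗ[ℂ] V)),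
          if_pos (Finset.mem_insert_self _ _)]
      calc ∑ j ∈ S', (t : ℂ) ^ j • G j
          = (∑ j ∈ S', (t : ℂ) ^ j • (∑ pq ∈ T.filter (fun pq => pq.1 + pq.2 = j), A pq))
            - ∑ j ∈ S', (t : ℂ) ^ j • (if j = k then (1 : V →ₗ[ℂ] V) else 0) := by
            rw [← Finset.sum_sub_distrib]
            exact Finset.sum_congr rfl fun j _ => smul_sub _ _ _
        _ = 0 := by rw [e1, e2, sub_self]
    have hG0 : ∀ j ∈ S', G j = 0 :=
      laurent_indep_mod S' G posSet posSet_infinite (fun u hu => posSet_ne_zero hu) hvan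
    constructor
    · have := hG0 k (Finset.mem_insert_self _ _)
      rw [hG, sub_eq_zero] at this
      simpa using this
    · intro pq hpq hne
      have hj : pq.1 + pq.2 ∈ S' := Finset.mem_insert_of_mem (Finset.mem_image_of_mem _ hpq)
      have := hG0 _ hj
      rw [hG, sub_eq_zero] at this
      simp only [if_neg hne] at this
      -- A pq * (sum over fiber) = A pq, but sum = 0
      have hmul : A pq * (∑ cd ∈ T.filter (fun cd => cd.1 + cd.2 = pq.1 + pq.2), A cd) = A pq := by
        rw [Finset.mul_sum]
        have hco : ∀ cd ∈ T.filter (fun cd => cd.1 + cd.2 = pq.1 + pq.2),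
            A pq * A cd = if cd = pq then A pq else 0 := fun cd _ => horth pq cd
        rw [Finset.sum_congr rfl hco, Finset.sum_ite_eq' _ pq (fun _ => A pq)]
        have hmem2 : pq ∈ T.filter (fun cd => cd.1 + cd.2 = pq.1 + pq.2) :=
          Finset.mem_filter.2 ⟨hpq, rfl⟩
        rw [if_pos hmem2]
      rw [this, mul_zero] at hmul
      exact hmul.symm
  -- weight space = range of projector
  have hWSeq : ∀ p q : ℤ, weightSpace h p q = LinearMap.range (A (p, q)) := by
    intro p q
    ext v
    rw [hmemWS]
    constructor
    · intro hv
      set T' : Finset (ℤ × ℤ) := insert (p, q) T with hT'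
      have hvan : ∀ z : ℂˣ, ∑ cd ∈ T', χ cd z • (A cd v - (if cd = (p, q) then v else 0)) = 0 := by
        intro z
        have e1 : ∑ cd ∈ T', χ cd z • A cd v = (h z : V →ₗ[ℂ] V) v := by
          rw [hexp z, LinearMap.sum_apply]
          rw [← Finset.sum_subset (Finset.subset_insert (p, q) T)]
          · exact Finset.sum_congr rfl fun cd _ => by rw [LinearMap.smul_apply]
          · intro cd _ hcd
            simp [hA0 cd hcd]
        have e2 : ∑ cd ∈ T', χ cd z • (if cd = (p, q) then v else 0) = χ (p, q) z • v := by
          have : ∀ cd ∈ T', χ cd z • (if cd = (p, q) then v else 0) =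
              (if cd = (p, q) then χ cd z • v else 0) := by
            intro cd _; split <;> simp [*]
          rw [Finset.sum_congr rfl this, Finset.sum_ite_eq' T' (p, q) (fun cd => χ cd z • v),
            if_pos (Finset.mem_insert_self _ _)]
        calc ∑ cd ∈ T', χ cd z • (A cd v - (if cd = (p, q) then v else 0))
            = (∑ cd ∈ T', χ cd z • A cd v)
              - ∑ cd ∈ T', χ cd z • (if cd = (p, q) then v else 0) := by
              rw [← Finset.sum_sub_distrib]
              exact Finset.sum_congr rfl fun cd _ => smul_sub _ _ _
          _ = (h z : V →ₗ[ℂ] V) v - χ (p, q) z • v := by rw [e1, e2]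
          _ = 0 := by rw [hv z, sub_self]
      have h5 : A (p, q) v - (if (p, q) = (p, q) then v else 0) = 0 :=
        char2_indep T' (fun cd => A cd v - (if cd = (p, q) then v else 0)) hvan
          (p, q) (Finset.mem_insert_self _ _)
      rw [if_pos rfl, sub_eq_zero] at h5
      exact ⟨v, h5⟩
    · rintro ⟨x, rfl⟩
      intro z
      by_cases hpqT : (p, q) ∈ T
      · rw [hexp z, LinearMap.sum_apply]
        have hterm : ∀ cd ∈ T, ((((z : ℂ) ^ cd.1 * (starRingEnd ℂ (z : ℂ)) ^ cd.2) • A cd :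
            V →ₗ[ℂ] V)) (A (p, q) x) =
            (if cd = (p, q) then ((z : ℂ) ^ cd.1 * (starRingEnd ℂ (z : ℂ)) ^ cd.2) •
              (A (p, q) x) else 0) := by
          intro cd _
          rw [LinearMap.smul_apply]
          have hc : A cd (A (p, q) x) = (A cd * A (p, q)) x := rfl
          rw [hc, horth cd (p, q)]
          by_cases he : (p, q) = cd
          · rw [if_pos he, if_pos he.symm, ← he]
          · rw [if_neg he, if_neg (fun hx => he hx.symm)]
            simp
        rw [Finset.sum_congr rfl hterm,
          Finset.sum_ite_eq' T (p, q)
            (fun cd => ((z : ℂ) ^ cd.1 * (starRingEnd ℂ (z : ℂ)) ^ cd.2) • (A (p, q) x)),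
          if_pos hpqT]
      · rw [hA0 (p, q) hpqT]
        simp
  -- now the four parts
  refine ⟨?_, ?_, ?_, ?_⟩
  · rw [iSupIndep_def]
    intro p
    rw [Submodule.disjoint_def]
    intro x hx hsup
    have hker : (⨆ q, ⨆ (_ : q ≠ p), weightSpace h q (k - q)) ≤
        LinearMap.ker (A (p, k - p)) := by
      refine iSup_le fun q => iSup_le fun hq => ?_
      rw [hWSeq]
      rintro w ⟨y, rfl⟩
      rw [LinearMap.mem_ker]
      have : A (p, k - p) (A (q, k - q) y) = (A (p, k - p) * A (q, k - q)) y := rfl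
      rw [this, horth, if_neg]
      · simp
      · intro he
        exact hq (by injection he)
    have h1 : A (p, k - p) x = 0 := hker hsup
    rw [hWSeq] at hx
    obtain ⟨y, rfl⟩ := hx
    have h2 : A (p, k - p) (A (p, k - p) y) = A (p, k - p) y := by
      have := congrArg (fun f => f y) (hidem (p, k - p))
      exact this
    rw [h1] at h2
    exact h2.symm
  · rw [Submodule.eq_top_iff']
    intro v
    have hv : v = ∑ pq ∈ T.filter (fun pq => pq.1 + pq.2 = k), A pq v := by
      have := congrArg (fun f => f v) hdiag.1
      simp only [LinearMap.sum_apply] at this ⊢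
      rw [this]
      rfl
    rw [hv]
    refine Submodule.sum_mem _ fun pq hpq => ?_
    have h2 := (Finset.mem_filter.1 hpq).2
    have hpqeq : pq = (pq.1, k - pq.1) := by
      ext
      · rfl
      · show pq.2 = k - pq.1; omega
    refine Submodule.mem_iSup_of_mem pq.1 ?_
    rw [hWSeq]
    exact ⟨v, by rw [← hpqeq]⟩
  · apply Set.Finite.subset ((T.finite_toSet).image Prod.fst)
    intro p hp
    simp only [Set.mem_setOf_eq] at hp
    by_contra hm
    apply hp
    rw [hWSeq]
    have : (p, k - p) ∉ T := by
      intro hin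
      exact hm ⟨(p, k - p), hin, rfl⟩
    rw [hA0 _ this, LinearMap.range_zero]
  · have hσWS : ∀ p q : ℤ, ∀ v ∈ weightSpace h p q, σ v ∈ weightSpace h q p := by
      intro p q v hv
      rw [hmemWS] at hv ⊢
      intro z
      have hz0 : (z : ℂ) ≠ 0 := z.ne_zero
      rw [← hcomm z v, hv z, hσsmul]
      congr 1
      rw [map_mul, map_zpow₀, map_zpow₀, Complex.conj_conj, mul_comm]
    intro p q _
    apply Set.eq_of_subset_of_subset
    · rintro w ⟨v, hv, rfl⟩
      exact hσWS p q v hv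
    · intro w hw
      exact ⟨σ w, hσWS q p w hw, hσinv w⟩
end

section
/- Let V be a finite-dimensional complex vector space, σ an antilinear involution on V, k an integer, and h : ℂˣ → GL(V) an algebraic representation with σ ∘ h(z) = h(z) ∘ σ for all z ∈ ℂˣ and h(t) = t^k • id for every positive real t. Then V admits a basis consisting of simultaneous eigenvectors: a basis (v_i) such that each v_i lies in some weight space V^{p,q} with p + q = k. In particular, the lattice spanned by such a basis is compatible with the Hodge decomposition, i.e., the basis is partitioned into bases of the individual summands V^{p,q}. -/
/-- `2 ^ · : ℤ → ℂ` is injective. -/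
lemma two_zpow_inj {a b : ℤ} (hab : (2:ℂ) ^ a = (2:ℂ) ^ b) : a = b := by
  have h2 : (2:ℂ) = ((2:ℝ):ℂ) := by norm_num
  rw [h2, ← Complex.ofReal_zpow, ← Complex.ofReal_zpow] at hab
  exact zpow_right_injective₀ (by norm_num : (0:ℝ) < 2) (by norm_num)
    (Complex.ofReal_injective hab)

/-- Distinct exponent pairs give distinct characters `z ↦ z^m conj(z)^n` on `ℂˣ`. -/
lemma char_exp_eq {m n m' n' : ℤ}
    (H : ∀ z : ℂˣ, (z:ℂ) ^ m * (starRingEnd ℂ (z:ℂ)) ^ n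
        = (z:ℂ) ^ m' * (starRingEnd ℂ (z:ℂ)) ^ n') :
    m = m' ∧ n = n' := by
  -- sum of exponents, from z = 2
  have hsum : m + n = m' + n' := by
    have h2 := H (Units.mk0 (2:ℂ) two_ne_zero)
    simp only [Units.val_mk0, map_ofNat] at h2
    rw [← zpow_add₀ (two_ne_zero), ← zpow_add₀ (two_ne_zero)] at h2
    exact two_zpow_inj h2
  -- difference of exponents, from z on the unit circle
  have hdiff : m - n = m' - n' := by
    by_contra hne
    set a : ℤ := (m - n) - (m' - n') with ha
    have ha0 : a ≠ 0 := fun h0 => hne (by omega)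
    have haR : ((a:ℝ)) ≠ 0 := Int.cast_ne_zero.mpr ha0
    set θ : ℝ := Real.pi / (a:ℝ) with hθ
    set z : ℂ := Complex.exp ((θ:ℂ) * Complex.I) with hzdef
    have hz : z ≠ 0 := Complex.exp_ne_zero _
    have hconj : (starRingEnd ℂ) z = z⁻¹ := by
      rw [hzdef, ← Complex.exp_conj]
      simp only [map_mul, Complex.conj_ofReal, Complex.conj_I, mul_neg]
      rw [← Complex.exp_neg]
    have hz2 := H (Units.mk0 z hz)
    simp only [Units.val_mk0, hconj] at hz2
    rw [inv_zpow, ← zpow_neg, ← zpow_add₀ hz, inv_zpow, ← zpow_neg, ← zpow_add₀ hz] at hz2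
    -- now z ^ (m - n) = z ^ (m' - n'), so z ^ a = 1
    have hza : z ^ a = 1 := by
      have h1 : z ^ ((m + -n) + -(m' + -n')) = 1 := by
        rw [zpow_add₀ hz, hz2, ← zpow_add₀ hz,
          show (m' + -n') + -(m' + -n') = 0 from add_neg_cancel _, zpow_zero]
      have ha' : a = (m + -n) + -(m' + -n') := by omega
      rw [ha']
      exact h1
    -- but z ^ a = exp (π i) = -1
    have hza' : z ^ a = -1 := by
      rw [hzdef, ← Complex.exp_int_mul]
      have haC : ((a:ℤ):ℂ) ≠ 0 := Int.cast_ne_zero.mpr ha0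
      rw [show ((a:ℂ)) * ((θ:ℂ) * Complex.I) = ((Real.pi:ℂ)) * Complex.I by
        rw [hθ]; push_cast; field_simp]
      exact Complex.exp_pi_mul_I
    rw [hza] at hza'
    norm_num at hza'
  constructor <;> omega

/-- Vector-valued linear independence of characters of `ℂˣ`. -/
lemma char_coeffs_zero {W : Type*} [AddCommGroup W] [Module ℂ W] {ι : Type*} [Fintype ι]
    (χ : ι → (ℂˣ →* ℂ)) (hχ : Function.Injective χ) (c : ι → W)
    (H : ∀ z : ℂˣ, (∑ i, χ i z • c i) = 0) : ∀ i, c i = 0 := by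
  intro i
  rw [← Module.forall_dual_apply_eq_zero_iff ℂ]
  intro φ
  have li : LinearIndependent ℂ (fun j : ι => (χ j : ℂˣ → ℂ)) :=
    (linearIndependent_monoidHom ℂˣ ℂ).comp χ hχ
  refine Fintype.linearIndependent_iff.mp li (fun j => φ (c j)) ?_ i
  funext z
  have : (∑ j, φ (c j) • (χ j : ℂˣ → ℂ)) z = ∑ j, φ (c j) * χ j z := by
    simp [Finset.sum_apply]
  rw [this]
  have : ∑ j, φ (c j) * χ j z = φ (∑ j, χ j z • c j) := by
    rw [map_sum]
    exact Finset.sum_congr rfl fun j _ => by rw [map_smul, smul_eq_mul, mul_comm]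
  rw [this, H z, map_zero]
  rfl

theorem algebraic_rep_weight_k_has_eigenvector_basis
    (V : Type*) [AddCommGroup V] [Module ℂ V] [FiniteDimensional ℂ V]
    (σ : V → V)
    (hσadd : ∀ x y : V, σ (x + y) = σ x + σ y)
    (hσsmul : ∀ (c : ℂ) (v : V), σ (c • v) = (starRingEnd ℂ c) • σ v)
    (hσinv : ∀ v : V, σ (σ v) = v)
    (k : ℤ) (h : ℂˣ →* (V →ₗ[ℂ] V)ˣ)
    (halg : IsAlgebraicRep h)
    (hcomm : ∀ (z : ℂˣ) (v : V), σ ((h z : V →ₗ[ℂ] V) v) = (h z : V →ₗ[ℂ] V) (σ v))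
    (hreal : ∀ (z : ℂˣ) (t : ℝ), 0 < t → (z : ℂ) = (t : ℂ) →
      (h z : V →ₗ[ℂ] V) = ((t : ℂ) ^ k) • LinearMap.id) :
    ∃ (n : ℕ) (b : Module.Basis (Fin n) ℂ V),
      ∀ i : Fin n, ∃ p q : ℤ, p + q = k ∧ b i ∈ weightSpace h p q := by
  classical
  obtain ⟨n, b, N, P, hP⟩ := halg
  set D : Finset (Fin 2 →₀ ℕ) :=
    Finset.univ.sup (fun ij : Fin n × Fin n => (P ij.1 ij.2).support) with hD
  have hsupp : ∀ i j, (P i j).support ⊆ D := fun i j =>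
    Finset.le_sup (f := fun ij : Fin n × Fin n => (P ij.1 ij.2).support) (Finset.mem_univ (i, j))
  -- the characters
  set χ : (Fin 2 →₀ ℕ) → (ℂˣ →* ℂ) := fun d =>
    { toFun := fun z => (z:ℂ) ^ ((d 0 : ℤ) - (N:ℤ)) * (starRingEnd ℂ (z:ℂ)) ^ ((d 1 : ℤ) - (N:ℤ))
      map_one' := by simp
      map_mul' := by
        intro z w
        simp only [Units.val_mul, map_mul, mul_zpow]
        ring } with hχdef
  have hχapp : ∀ d (z : ℂˣ), χ d z
      = (z:ℂ) ^ ((d 0 : ℤ) - (N:ℤ)) * (starRingEnd ℂ (z:ℂ)) ^ ((d 1 : ℤ) - (N:ℤ)) :=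
    fun d z => rfl
  have hχinj : Function.Injective χ := by
    intro d d' hdd
    have hpt := fun z => DFunLike.congr_fun hdd z
    simp only [hχapp] at hpt
    obtain ⟨h1, h2⟩ := char_exp_eq hpt
    have e0 : d 0 = d' 0 := by omega
    have e1 : d 1 = d' 1 := by omega
    apply Finsupp.ext
    intro i
    fin_cases i <;> assumption
  -- the "Fourier coefficient" endomorphisms
  set A : (Fin 2 →₀ ℕ) → (V →ₗ[ℂ] V) := fun d =>
    Matrix.toLin b b (Matrix.of fun i j => MvPolynomial.coeff d (P i j)) with hA
  have hz0 : ∀ z : ℂˣ, (z:ℂ) ≠ 0 := fun z => z.ne_zero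
  have hzc0 : ∀ z : ℂˣ, (starRingEnd ℂ) (z:ℂ) ≠ 0 := fun z => by
    simpa using z.ne_zero
  -- decomposition of h
  have hdec : ∀ z : ℂˣ, ((h z : V →ₗ[ℂ] V)) = ∑ d ∈ D, χ d z • A d := by
    intro z
    apply (LinearMap.toMatrix b b).injective
    rw [map_sum]
    ext i j
    rw [hP z i j]
    have hterm : ∀ d, LinearMap.toMatrix b b (χ d z • A d)
        = χ d z • (Matrix.of fun i j => MvPolynomial.coeff d (P i j)) := by
      intro d; rw [map_smul, hA, LinearMap.toMatrix_toLin]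
    rw [Finset.sum_congr rfl fun d _ => hterm d]
    rw [Matrix.sum_apply]
    simp only [Matrix.smul_apply, Matrix.of_apply, smul_eq_mul]
    rw [MvPolynomial.eval_eq']
    rw [Finset.sum_subset (hsupp i j) (by
      intro d _ hd
      rw [MvPolynomial.notMem_support_iff.mp hd]
      ring)]
    rw [Finset.sum_mul]
    refine Finset.sum_congr rfl fun d _ => ?_
    rw [hχapp]
    rw [Fin.prod_univ_two]
    simp only [Matrix.cons_val_zero, Matrix.cons_val_one, Matrix.head_cons]
    rw [zpow_sub₀ (hz0 z), zpow_sub₀ (hzc0 z), mul_zpow]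
    simp only [zpow_neg, zpow_natCast]
    field_simp
  -- sum of the A d is the identity
  have hone : (∑ d ∈ D, A d) = (1 : V →ₗ[ℂ] V) := by
    calc ∑ d ∈ D, A d
        = ∑ d ∈ D, χ d (1:ℂˣ) • A d :=
          (Finset.sum_congr rfl fun d _ => by rw [map_one, one_smul]).symm
      _ = ((h 1 : V →ₗ[ℂ] V)) := (hdec 1).symm
      _ = 1 := by rw [map_one, Units.val_one]
  -- projection property
  have hproj : ∀ (z : ℂˣ), ∀ d ∈ D, (h z : V →ₗ[ℂ] V) * A d = χ d z • A d := by
    intro z d hd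
    have key : ∀ e : {x // x ∈ D},
        χ (e:Fin 2 →₀ ℕ) z • A e - (h z : V →ₗ[ℂ] V) * A e = 0 := by
      refine char_coeffs_zero (fun e : {x // x ∈ D} => χ e)
        (fun e e' hee => Subtype.ext (hχinj hee))
        (fun e => χ (e:Fin 2 →₀ ℕ) z • A e - (h z : V →ₗ[ℂ] V) * A e) ?_
      intro w
      have expand : ∀ e : {x // x ∈ D},
          χ (e:Fin 2 →₀ ℕ) w • (χ (e:Fin 2 →₀ ℕ) z • A e - (h z : V →ₗ[ℂ] V) * A e)
          = χ (e:Fin 2 →₀ ℕ) (z*w) • A e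
            - (h z : V →ₗ[ℂ] V) * (χ (e:Fin 2 →₀ ℕ) w • A e) := by
        intro e
        rw [smul_sub, smul_smul, map_mul, mul_comm ((χ (e:Fin 2 →₀ ℕ)) z), mul_smul_comm]
      rw [Finset.sum_congr rfl fun e _ => expand e]
      rw [Finset.sum_sub_distrib, ← Finset.mul_sum]
      rw [Finset.sum_coe_sort D (fun d => χ d (z*w) • A d),
        Finset.sum_coe_sort D (fun d => χ d w • A d)]
      rw [← hdec, ← hdec, ← Units.val_mul, ← map_mul]
      rw [sub_self]
    have := key ⟨d, hd⟩
    rw [sub_eq_zero] at this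
    exact this.symm
  -- each range lies in a weight space
  have hweight : ∀ d ∈ D, ∀ v ∈ LinearMap.range (A d),
      v ∈ weightSpace h ((d 0 : ℤ) - (N:ℤ)) ((d 1 : ℤ) - (N:ℤ)) := by
    intro d hd v hv
    obtain ⟨u, rfl⟩ := hv
    rw [weightSpace, Submodule.mem_iInf]
    intro z
    rw [Module.End.mem_eigenspace_iff]
    have : (h z : V →ₗ[ℂ] V) (A d u) = ((h z : V →ₗ[ℂ] V) * A d) u := rfl
    rw [this, hproj z d hd, LinearMap.smul_apply, hχapp]
  -- the ranges span V
  have hspan : Submodule.span ℂ (⋃ d ∈ D, (LinearMap.range (A d) : Set V)) = ⊤ := by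
    rw [eq_top_iff]
    intro v _
    have hv : v = ∑ d ∈ D, A d v := by
      rw [← LinearMap.sum_apply, hone, Module.End.one_apply]
    rw [hv]
    exact Submodule.sum_mem _ fun d hd =>
      Submodule.subset_span (Set.mem_biUnion hd ⟨v, rfl⟩)
  obtain ⟨s, hsub, hspan', hli⟩ :=
    exists_linearIndependent ℂ (⋃ d ∈ D, (LinearMap.range (A d) : Set V))
  have hfin : s.Finite := hli.setFinite
  haveI : Fintype s := hfin.fintype
  let B : Module.Basis s ℂ V := Module.Basis.mk hli (by
    rw [Subtype.range_coe, hspan', hspan])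
  refine ⟨Fintype.card s, B.reindex (Fintype.equivFin s), ?_⟩
  intro i
  set x : s := (Fintype.equivFin s).symm i with hx
  have hbx : (B.reindex (Fintype.equivFin s)) i = (x : V) := by
    rw [Module.Basis.reindex_apply, ← hx, Module.Basis.mk_apply]
  have hxT : (x : V) ∈ ⋃ d ∈ D, (LinearMap.range (A d) : Set V) := hsub x.2
  rw [Set.mem_iUnion₂] at hxT
  obtain ⟨d, hd, hvx⟩ := hxT
  have hne : (x : V) ≠ 0 := by
    have := (B.reindex (Fintype.equivFin s)).ne_zero i
    rwa [hbx] at this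
  have hws := hweight d hd _ hvx
  refine ⟨(d 0 : ℤ) - (N:ℤ), (d 1 : ℤ) - (N:ℤ), ?_, by rwa [hbx]⟩
  -- p + q = k
  set p : ℤ := (d 0 : ℤ) - (N:ℤ)
  set q : ℤ := (d 1 : ℤ) - (N:ℤ)
  have h2 : ((2:ℝ):ℂ) ≠ 0 := by norm_num
  set z2 : ℂˣ := Units.mk0 ((2:ℝ):ℂ) h2 with hz2
  have hrk := hreal z2 2 (by norm_num) (by rw [hz2]; rfl)
  have hev : (h z2 : V →ₗ[ℂ] V) (x:V) = ((z2:ℂ) ^ p * (starRingEnd ℂ (z2:ℂ)) ^ q) • (x:V) := by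
    rw [weightSpace, Submodule.mem_iInf] at hws
    exact Module.End.mem_eigenspace_iff.mp (hws z2)
  rw [hrk] at hev
  simp only [LinearMap.smul_apply, LinearMap.id_apply] at hev
  have hconj2 : (starRingEnd ℂ) ((z2:ℂ)) = ((2:ℝ):ℂ) := by
    show (starRingEnd ℂ) (((2:ℝ):ℂ)) = ((2:ℝ):ℂ)
    exact Complex.conj_ofReal 2
  rw [hconj2] at hev
  have hzval : ((z2:ℂ)) = ((2:ℝ):ℂ) := rfl
  rw [hzval, ← zpow_add₀ h2] at hev
  have hsx : (((2:ℝ):ℂ) ^ k - ((2:ℝ):ℂ) ^ (p + q)) • (x:V) = 0 := by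
    rw [sub_smul, hev, sub_self]
  have hcoef := (smul_eq_zero.mp hsx).resolve_right hne
  have heq : ((2:ℝ):ℂ) ^ (p + q) = ((2:ℝ):ℂ) ^ k := (sub_eq_zero.mp hcoef).symm
  have h2c : ((2:ℝ):ℂ) = (2:ℂ) := by norm_num
  rw [h2c] at heq
  exact two_zpow_inj heq
end

section
/- Let V be a finite-dimensional complex vector space, σ an antilinear involution on V, k an integer, and suppose given complex subspaces W(p, q) of V indexed by pairs of integers (p, q) with p + q = k, only finitely many of which are nonzero, such that V is the internal direct sum of the W(p, q) and σ(W(p, q)) = W(q, p) for all such pairs. Then there exists a group homomorphism h : ℂˣ → GL(V) such that σ ∘ h(z) = h(z) ∘ σ for all z ∈ ℂˣ, h(t) = t^k • id for every positive real t, and for every pair (p, q) with p + q = k the weight space {v ∈ V : h(z) v = z^p (conj z)^q • v for all z ∈ ℂˣ} equals W(p, q). That is, every pure Hodge decomposition of weight k arises from a representation of ℂˣ. -/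
namespace HodgeAux

/-- Index type of a pure Hodge structure of weight `k`. -/
abbrev Idx (k : ℤ) := {x : ℤ × ℤ // x.1 + x.2 = k}

/-- The character `z ↦ z^p (conj z)^q` attached to an index. -/
noncomputable def chi (k : ℤ) (z : ℂˣ) (i : Idx k) : ℂ :=
  (z : ℂ) ^ i.1.1 * (starRingEnd ℂ (z : ℂ)) ^ i.1.2

lemma chi_ne_zero (k : ℤ) (z : ℂˣ) (i : Idx k) : chi k z i ≠ 0 := by
  have h1 : (z : ℂ) ≠ 0 := z.ne_zero
  have h2 : (starRingEnd ℂ) (z : ℂ) ≠ 0 := by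
    simpa using h1
  exact mul_ne_zero (zpow_ne_zero _ h1) (zpow_ne_zero _ h2)

lemma chi_mul (k : ℤ) (z w : ℂˣ) (i : Idx k) : chi k (z * w) i = chi k z i * chi k w i := by
  simp only [chi, Units.val_mul, map_mul, mul_zpow]
  ring

lemma chi_one (k : ℤ) (i : Idx k) : chi k 1 i = 1 := by
  simp [chi]

variable {V : Type*} [AddCommGroup V] [Module ℂ V] {k : ℤ} {W : ℤ × ℤ → Submodule ℂ V}

/-- The linear equivalence `V ≃ ⨁ W(p,q)` coming from an internal direct sum. -/
noncomputable def mu (hD : DirectSum.IsInternal (fun x : Idx k => W x.1)) :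
    (DirectSum (Idx k) fun i => W i.1) ≃ₗ[ℂ] V :=
  LinearEquiv.ofBijective (DirectSum.coeLinearMap _) hD

lemma mu_of (hD : DirectSum.IsInternal (fun x : Idx k => W x.1)) (i : Idx k) (x : W i.1) :
    mu hD (DirectSum.of (fun i : Idx k => W i.1) i x) = (x : V) := by
  exact DirectSum.coeLinearMap_of (fun x : Idx k => W x.1) i x

/-- The operator acting by `chi k z i` on the `i`-th summand. -/
noncomputable def fmap (hD : DirectSum.IsInternal (fun x : Idx k => W x.1)) (z : ℂˣ) :
    V →ₗ[ℂ] V :=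
  (mu hD).toLinearMap
    ∘ₗ (DFinsupp.mapRange.linearMap fun i : Idx k =>
        chi k z i • (LinearMap.id : W i.1 →ₗ[ℂ] W i.1))
    ∘ₗ (mu hD).symm.toLinearMap

lemma fmap_apply (hD : DirectSum.IsInternal (fun x : Idx k => W x.1)) (z : ℂˣ) (v : V) :
    fmap hD z v = mu hD (DFinsupp.mapRange.linearMap
      (fun i : Idx k => chi k z i • (LinearMap.id : W i.1 →ₗ[ℂ] W i.1)) ((mu hD).symm v)) :=
  rfl

lemma mapRange_component (z : ℂˣ)
    (c : DirectSum (Idx k) fun i => W i.1) (j : Idx k) :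
    (DFinsupp.mapRange.linearMap
      (fun i : Idx k => chi k z i • (LinearMap.id : W i.1 →ₗ[ℂ] W i.1)) c) j
      = chi k z j • c j := by
  rw [DFinsupp.mapRange.linearMap_apply, DFinsupp.mapRange_apply]
  rfl

lemma fmap_mem (hD : DirectSum.IsInternal (fun x : Idx k => W x.1)) (z : ℂˣ)
    (i : Idx k) (v : V) (hv : v ∈ W i.1) :
    fmap hD z v = chi k z i • v := by
  classical
  have h1 : (mu hD).symm v = DirectSum.of (fun i : Idx k => W i.1) i ⟨v, hv⟩ := by
    rw [LinearEquiv.symm_apply_eq, mu_of]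
  rw [fmap_apply, h1]
  have h2 : (DFinsupp.mapRange.linearMap
      (fun i : Idx k => chi k z i • (LinearMap.id : W i.1 →ₗ[ℂ] W i.1)))
      (DirectSum.of (fun i : Idx k => W i.1) i ⟨v, hv⟩)
      = DirectSum.of (fun i : Idx k => W i.1) i (chi k z i • ⟨v, hv⟩) := by
    ext j
    by_cases hj : i = j
    · subst hj
      rw [mapRange_component, DirectSum.of_eq_same, DirectSum.of_eq_same]
    · rw [mapRange_component, DirectSum.of_eq_of_ne _ _ _ (Ne.symm hj),
        DirectSum.of_eq_of_ne _ _ _ (Ne.symm hj), smul_zero]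
  rw [h2, mu_of]
  rfl

end HodgeAux

open HodgeAux in
theorem hodge_decomposition_comes_from_representation
    (V : Type*) [AddCommGroup V] [Module ℂ V] [FiniteDimensional ℂ V]
    (σ : V → V)
    (hσadd : ∀ x y : V, σ (x + y) = σ x + σ y)
    (hσsmul : ∀ (c : ℂ) (v : V), σ (c • v) = (starRingEnd ℂ c) • σ v)
    (hσinv : ∀ v : V, σ (σ v) = v)
    (k : ℤ) (W : ℤ × ℤ → Submodule ℂ V)
    (hindep : iSupIndep (fun x : {x : ℤ × ℤ // x.1 + x.2 = k} => W x.1))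
    (hspan : (⨆ x : {x : ℤ × ℤ // x.1 + x.2 = k}, W x.1) = ⊤)
    (hfin : Set.Finite {x : ℤ × ℤ | x.1 + x.2 = k ∧ W x ≠ ⊥})
    (hconj : ∀ p q : ℤ, p + q = k → σ '' (W (p, q) : Set V) = (W (q, p) : Set V)) :
    ∃ h : ℂˣ →* (V →ₗ[ℂ] V)ˣ,
      (∀ (z : ℂˣ) (v : V), σ ((h z : V →ₗ[ℂ] V) v) = (h z : V →ₗ[ℂ] V) (σ v)) ∧
      (∀ (z : ℂˣ) (t : ℝ), 0 < t → (z : ℂ) = (t : ℂ) →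
        (h z : V →ₗ[ℂ] V) = ((t : ℂ) ^ k) • LinearMap.id) ∧
      (∀ p q : ℤ, p + q = k → weightSpace h p q = W (p, q)) := by
  classical
  have hD : DirectSum.IsInternal (fun x : Idx k => W x.1) :=
    (DirectSum.isInternal_submodule_iff_iSupIndep_and_iSup_eq_top _).mpr ⟨hindep, hspan⟩
  set f : ℂˣ → V →ₗ[ℂ] V := fun z => fmap hD z with hfdef
  have hfA : ∀ (z : ℂˣ) (i : Idx k) (v : V), v ∈ W i.1 → f z v = chi k z i • v :=
    fun z i v hv => fmap_mem hD z i v hv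
  have hmemtop : ∀ v : V, v ∈ ⨆ i : Idx k, W i.1 := fun v => hspan ▸ Submodule.mem_top
  have hext : ∀ F G : V →ₗ[ℂ] V, (∀ (i : Idx k), ∀ v ∈ W i.1, F v = G v) → F = G := by
    intro F G hFG
    ext v
    exact Submodule.iSup_induction (fun i : Idx k => W i.1) (motive := fun v => F v = G v)
      (hmemtop v) (fun i x hx => hFG i x hx) (by show F 0 = G 0; simp)
      (fun x y hx hy => by
        show F (x + y) = G (x + y)
        rw [map_add, map_add, show F x = G x from hx, show F y = G y from hy])
  have hfone : f 1 = LinearMap.id := by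
    refine hext _ _ (fun i v hv => ?_)
    rw [hfA 1 i v hv, chi_one, one_smul, LinearMap.id_apply]
  have hfmul : ∀ z w : ℂˣ, f (z * w) = f z ∘ₗ f w := by
    intro z w
    refine hext _ _ (fun i v hv => ?_)
    have h1 : (f z ∘ₗ f w) v = f z (chi k w i • v) := by
      rw [LinearMap.comp_apply, hfA w i v hv]
    rw [hfA (z * w) i v hv, h1, map_smul, hfA z i v hv, chi_mul, smul_smul, mul_comm]
  have hσ0 : σ 0 = 0 := by
    have h := hσadd 0 0
    rw [add_zero] at h
    exact (add_eq_left.mp h.symm)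
  let h : ℂˣ →* (V →ₗ[ℂ] V)ˣ :=
  { toFun := fun z =>
      { val := f z
        inv := f z⁻¹
        val_inv := by
          rw [Module.End.mul_eq_comp, ← hfmul, mul_inv_cancel, hfone]
          rfl
        inv_val := by
          rw [Module.End.mul_eq_comp, ← hfmul, inv_mul_cancel, hfone]
          rfl }
    map_one' := Units.ext (by simpa [Module.End.one_eq_id] using hfone)
    map_mul' := fun z w => Units.ext (by simpa [Module.End.mul_eq_comp] using hfmul z w) }
  have hhval : ∀ z : ℂˣ, ((h z : (V →ₗ[ℂ] V)ˣ) : V →ₗ[ℂ] V) = f z := fun z => rfl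
  refine ⟨h, ?_, ?_, ?_⟩
  · -- commutes with σ
    intro z v
    rw [hhval]
    refine Submodule.iSup_induction (fun i : Idx k => W i.1)
      (motive := fun v => σ (f z v) = f z (σ v)) (hmemtop v) ?_ ?_ ?_
    · rintro ⟨⟨p, q⟩, hpq⟩ x hx
      have hqp : ((q, p) : ℤ × ℤ).1 + ((q, p) : ℤ × ℤ).2 = k := by
        simp only [Prod.fst, Prod.snd] at hpq ⊢
        omega
      have hσx : σ x ∈ W (q, p) := by
        show σ x ∈ (W (q, p) : Set V)
        rw [← hconj p q hpq]
        exact ⟨x, hx, rfl⟩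
      show σ (f z x) = f z (σ x)
      rw [hfA z ⟨(p, q), hpq⟩ x hx, hσsmul, hfA z ⟨(q, p), hqp⟩ (σ x) hσx]
      congr 1
      simp only [chi, map_mul, map_zpow₀, starRingEnd_self_apply]
      ring
    · show σ (f z 0) = f z (σ 0)
      rw [map_zero, hσ0, map_zero]
    · intro x y hx hy
      show σ (f z (x + y)) = f z (σ (x + y))
      rw [map_add, hσadd, hσadd, map_add,
        show σ (f z x) = f z (σ x) from hx, show σ (f z y) = f z (σ y) from hy]
  · -- positive reals act by t^k
    intro z t ht hz
    rw [hhval]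
    refine hext _ _ (fun i v hv => ?_)
    obtain ⟨⟨p, q⟩, hpq⟩ := i
    have hpq' : p + q = k := hpq
    have htne : (t : ℂ) ≠ 0 := by
      simp only [ne_eq, Complex.ofReal_eq_zero]
      exact ne_of_gt ht
    have hχ : chi k z ⟨(p, q), hpq⟩ = (t : ℂ) ^ k := by
      simp only [chi, hz, Complex.conj_ofReal]
      rw [← zpow_add₀ htne]
      norm_num [hpq']
    rw [hfA z ⟨(p, q), hpq⟩ v hv, hχ, LinearMap.smul_apply, LinearMap.id_apply]
  · -- weight spaces
    intro p q hpq
    have hi0 : ((p, q) : ℤ × ℤ).1 + ((p, q) : ℤ × ℤ).2 = k := hpq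
    set i0 : Idx k := ⟨(p, q), hi0⟩ with hi0def
    apply le_antisymm
    · intro v hv
      simp only [weightSpace, Submodule.mem_iInf] at hv
      have hv' : ∀ z : ℂˣ, f z v = chi k z i0 • v := by
        intro z
        have := Module.End.mem_eigenspace_iff.mp (hv z)
        rw [hhval] at this
        exact this
      set c : DirectSum (Idx k) fun i => W i.1 := (mu hD).symm v with hcdef
      have hcomp : ∀ (z : ℂˣ) (j : Idx k), chi k z j • c j = chi k z i0 • c j := by
        intro z j
        have h1 : mu hD ((DFinsupp.mapRange.linearMap
            (fun i : Idx k => chi k z i • (LinearMap.id : W i.1 →ₗ[ℂ] W i.1))) c)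
            = mu hD (chi k z i0 • c) := by
          rw [map_smul, ← fmap_apply, LinearEquiv.apply_symm_apply]
          exact hv' z
        have h2 := (mu hD).injective h1
        calc chi k z j • c j
            = ((DFinsupp.mapRange.linearMap
              (fun i : Idx k => chi k z i • (LinearMap.id : W i.1 →ₗ[ℂ] W i.1))) c) j :=
              (mapRange_component z c j).symm
          _ = (chi k z i0 • c) j := by rw [h2]
          _ = chi k z i0 • c j := DFinsupp.smul_apply _ _ _
      have hz0 : ∀ j : Idx k, j ≠ i0 → c j = 0 := by
        intro j hj
        by_contra hcj
        have hene : Complex.exp Complex.I ≠ 0 := Complex.exp_ne_zero _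
        set z0 : ℂˣ := Units.mk0 (Complex.exp Complex.I) hene with hz0def
        have hc := hcomp z0 j
        have hchi : chi k z0 j = chi k z0 i0 := by
          have hsub : (chi k z0 j - chi k z0 i0) • c j = 0 := by
            rw [sub_smul, hc, sub_self]
          rcases smul_eq_zero.mp hsub with h' | h'
          · exact sub_eq_zero.mp h'
          · exact absurd h' hcj
        obtain ⟨⟨p', q'⟩, hpq'⟩ := j
        have hpq'' : p' + q' = k := hpq'
        -- chi values are exponentials
        have hval : ∀ (a b : ℤ) (hab : ((a, b) : ℤ × ℤ).1 + ((a, b) : ℤ × ℤ).2 = k),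
            chi k z0 ⟨(a, b), hab⟩ = Complex.exp (((a - b : ℤ) : ℂ) * Complex.I) := by
          intro a b hab
          have hconjval : (starRingEnd ℂ) (Complex.exp Complex.I)
              = Complex.exp (-Complex.I) := by
            rw [← Complex.exp_conj, Complex.conj_I]
          simp only [chi, hz0def, Units.val_mk0, hconjval]
          rw [← Complex.exp_int_mul, ← Complex.exp_int_mul, ← Complex.exp_add]
          congr 1
          push_cast
          ring
        rw [hval p' q' hpq', hval p q hi0] at hchi
        rw [Complex.exp_eq_exp_iff_exists_int] at hchi
        obtain ⟨n, hn⟩ := hchi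
        have hcancel : ((p' - q' : ℤ) : ℂ) = ((p - q : ℤ) : ℂ) + (n : ℂ) * (2 * (Real.pi : ℂ)) := by
          apply mul_right_cancel₀ Complex.I_ne_zero
          linear_combination hn
        have hreal : ((p' - q' : ℤ) : ℝ) = ((p - q : ℤ) : ℝ) + (n : ℝ) * (2 * Real.pi) := by
          exact_mod_cast hcancel
        by_cases hn0 : n = 0
        · subst hn0
          simp only [Int.cast_zero, zero_mul, add_zero, Int.cast_sub] at hreal
          have hd : p' - q' = p - q := by exact_mod_cast hreal
          have hp' : p' = p := by omega
          have hq' : q' = q := by omega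
          exact hj (by subst hp'; subst hq'; rfl)
        · have hirr : Irrational (((2 * n : ℤ) : ℝ) * Real.pi) :=
            irrational_pi.intCast_mul (by omega)
          have heq : (((p' - q') - (p - q) : ℤ) : ℝ) = ((2 * n : ℤ) : ℝ) * Real.pi := by
            push_cast
            push_cast at hreal
            linarith
          rw [← heq] at hirr
          exact Int.not_irrational _ hirr
      have hc_of : c = DirectSum.of (fun i : Idx k => W i.1) i0 (c i0) := by
        refine DFinsupp.ext fun j => ?_
        by_cases hji : j = i0
        · subst hji
          rw [DirectSum.of_eq_same]
        · rw [DirectSum.of_eq_of_ne _ _ _ hji, hz0 j hji]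
      have hveq : ((c i0 : V)) = v := by
        rw [← mu_of hD i0 (c i0), ← hc_of, hcdef, LinearEquiv.apply_symm_apply]
      exact hveq ▸ (c i0).2
    · intro v hv
      simp only [weightSpace, Submodule.mem_iInf]
      intro z
      rw [Module.End.mem_eigenspace_iff, hhval]
      exact hfA z i0 v hv
end

section
/- Let V be a finite-dimensional complex vector space and h : ℂˣ → GL(V) an algebraic representation. For each integer k, let V_k = {v ∈ V : h(t) v = t^k • v for all positive real t}. Then V is the internal direct sum of the subspaces V_k over k ∈ ℤ (only finitely many nonzero), and each V_k is invariant under h(z) for every z ∈ ℂˣ. That is, every polynomial ℂˣ-action on V decomposes as a direct sum of actions of pure weights k. -/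
open Polynomial in
lemma aux_poly_eq_of_pos_real (p r : Polynomial ℂ)
    (hpr : ∀ t : ℝ, 0 < t → p.eval (t:ℂ) = r.eval (t:ℂ)) : p = r := by
  have hsub : p - r = 0 := by
    apply Polynomial.eq_zero_of_infinite_isRoot
    apply Set.Infinite.mono (s := (fun t : ℝ => (t:ℂ)) '' Set.Ioi 0)
    · rintro z ⟨t, ht, rfl⟩
      simp [Polynomial.IsRoot, hpr t ht, sub_eq_zero]
    · exact Set.Infinite.image (Set.injOn_of_injective Complex.ofReal_injective)
        (Set.Ioi_infinite 0)
  exact sub_eq_zero.mp hsub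

open Polynomial in
lemma aux_coeff_comp_C_mul_X (p : Polynomial ℂ) (s : ℂ) (m : ℕ) :
    (p.comp (Polynomial.C s * Polynomial.X)).coeff m = p.coeff m * s ^ m := by
  induction p using Polynomial.induction_on' with
  | add p q hp hq => simp [add_comp, hp, hq, add_mul]
  | monomial e a =>
      rw [monomial_comp, mul_pow, ← C_pow, ← mul_assoc, ← C_mul]
      rw [coeff_C_mul, coeff_X_pow, coeff_monomial]
      by_cases hme : m = e
      · subst hme; simp
      · simp [hme, Ne.symm hme]

lemma aux_eval_aeval (p : MvPolynomial (Fin 2) ℂ) (z : ℂ) :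
    Polynomial.eval z (MvPolynomial.aeval (fun _ : Fin 2 => (Polynomial.X : Polynomial ℂ)) p)
      = MvPolynomial.eval (fun _ : Fin 2 => z) p := by
  induction p using MvPolynomial.induction_on with
  | C a => simp
  | add p r hp hr => simp [hp, hr]
  | mul_X p idx hp => simp [hp]


/-- The subspace `V_k = {v | h(t) v = t^k • v for all positive real t}`. -/
noncomputable def realWeightSpace {V : Type*} [AddCommGroup V] [Module ℂ V]
    (h : ℂˣ →* (V →ₗ[ℂ] V)ˣ) (k : ℤ) : Submodule ℂ V :=
  ⨅ u : {u : ℂˣ // ∃ t : ℝ, 0 < t ∧ (u : ℂ) = (t : ℂ)},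
    Module.End.eigenspace ((h u : V →ₗ[ℂ] V)) (((u : ℂˣ) : ℂ) ^ k)

set_option maxHeartbeats 1000000 in
theorem algebraic_rep_decomposes_into_pure_weights
    (V : Type*) [AddCommGroup V] [Module ℂ V] [FiniteDimensional ℂ V]
    (h : ℂˣ →* (V →ₗ[ℂ] V)ˣ)
    (halg : IsAlgebraicRep h) :
    iSupIndep (fun k : ℤ => realWeightSpace h k) ∧
    (⨆ k : ℤ, realWeightSpace h k) = ⊤ ∧
    Set.Finite {k : ℤ | realWeightSpace h k ≠ ⊥} ∧
    (∀ (k : ℤ) (z : ℂˣ),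
      Submodule.map ((h z : V →ₗ[ℂ] V)) (realWeightSpace h k) ≤ realWeightSpace h k) := by
  classical
  obtain ⟨n, b, N, P, hP⟩ := halg
  obtain ⟨q, hqeval⟩ : ∃ q : Fin n → Fin n → Polynomial ℂ, ∀ (z : ℂ) (i j : Fin n),
      (q i j).eval z = MvPolynomial.eval (fun _ : Fin 2 => z) (P i j) := by
    refine ⟨fun i j => MvPolynomial.aeval (fun _ : Fin 2 => (Polynomial.X : Polynomial ℂ)) (P i j),
      fun z i j => aux_eval_aeval (P i j) z⟩
  -- the basic matrix-entry formula for positive real units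
  have hA : ∀ (u : ℂˣ) (t : ℝ), 0 < t → (u:ℂ) = (t:ℂ) → ∀ i j : Fin n,
      LinearMap.toMatrix b b ((h u : V →ₗ[ℂ] V)) i j
        = (q i j).eval (t:ℂ) * ((t:ℂ) * (t:ℂ)) ^ (-(N:ℤ)) := by
    intro u t ht hu i j
    rw [hP u i j, hu, Complex.conj_ofReal,
      show (![(t:ℂ),(t:ℂ)] : Fin 2 → ℂ) = fun _ => (t:ℂ) from
        funext fun i => by fin_cases i <;> rfl, ← hqeval]
  -- multiplicativity of evaluated entries
  have hmul : ∀ (t s : ℝ), 0 < t → 0 < s → ∀ i j : Fin n,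
      (q i j).eval ((t:ℂ) * (s:ℂ)) = ∑ k, (q i k).eval (t:ℂ) * (q k j).eval (s:ℂ) := by
    intro t s ht hs i j
    have hts : (0:ℝ) < t * s := mul_pos ht hs
    have hnt : ((t:ℂ)) ≠ 0 := Complex.ofReal_ne_zero.mpr ht.ne'
    have hns : ((s:ℂ)) ≠ 0 := Complex.ofReal_ne_zero.mpr hs.ne'
    set u1 : ℂˣ := Units.mk0 _ hnt with hu1
    set u2 : ℂˣ := Units.mk0 _ hns with hu2
    have hu12 : (((u1*u2 : ℂˣ)):ℂ) = ((t*s : ℝ) : ℂ) := by push_cast; rfl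
    have hM : LinearMap.toMatrix b b ((h (u1*u2) : V →ₗ[ℂ] V))
        = LinearMap.toMatrix b b ((h u1 : V →ₗ[ℂ] V))
          * LinearMap.toMatrix b b ((h u2 : V →ₗ[ℂ] V)) := by
      rw [map_mul, Units.val_mul, LinearMap.toMatrix_mul]
    have hentry := congrFun (congrFun hM i) j
    rw [Matrix.mul_apply] at hentry
    rw [hA (u1*u2) (t*s) hts hu12 i j] at hentry
    simp only [hA u1 t ht rfl, hA u2 s hs rfl] at hentry
    have hbase : ((↑(t*s):ℂ) * (↑(t*s):ℂ)) = ((t:ℂ)*(t:ℂ)) * ((s:ℂ)*(s:ℂ)) := by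
      push_cast; ring
    rw [hbase, mul_zpow] at hentry
    have hrhs : ∑ k, ((q i k).eval (t:ℂ) * ((t:ℂ)*(t:ℂ))^(-(N:ℤ)))
          * ((q k j).eval (s:ℂ) * ((s:ℂ)*(s:ℂ))^(-(N:ℤ)))
        = (∑ k, (q i k).eval (t:ℂ) * (q k j).eval (s:ℂ))
          * (((t:ℂ)*(t:ℂ))^(-(N:ℤ)) * ((s:ℂ)*(s:ℂ))^(-(N:ℤ))) := by
      rw [Finset.sum_mul]
      exact Finset.sum_congr rfl fun k _ => by ring
    rw [hrhs] at hentry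
    have hnz : (((t:ℂ)*(t:ℂ))^(-(N:ℤ)) * ((s:ℂ)*(s:ℂ))^(-(N:ℤ))) ≠ 0 :=
      mul_ne_zero (zpow_ne_zero _ (mul_ne_zero hnt hnt)) (zpow_ne_zero _ (mul_ne_zero hns hns))
    have := mul_right_cancel₀ hnz hentry
    rw [← this]; push_cast; ring_nf
  -- identity at t = 1
  have hone : ∀ i j : Fin n, (q i j).eval 1 = if i = j then (1:ℂ) else 0 := by
    intro i j
    have h1 : ((1:ℂˣ):ℂ) = ((1:ℝ):ℂ) := by norm_num
    have hA1 := hA 1 1 one_pos h1 i j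
    rw [map_one] at hA1
    simp only [Units.val_one, LinearMap.toMatrix_one, Complex.ofReal_one, mul_one, one_zpow,
      Matrix.one_apply] at hA1
    exact hA1.symm
  -- first coefficient extraction
  have stepA : ∀ (l : ℕ) (t : ℝ), 0 < t → ∀ i j : Fin n,
      ∑ k, (q i k).eval (t:ℂ) * (q k j).coeff l = (q i j).coeff l * (t:ℂ)^l := by
    intro l t ht i j
    have hpoly : (q i j).comp (Polynomial.C (t:ℂ) * Polynomial.X)
        = ∑ k, Polynomial.C ((q i k).eval (t:ℂ)) * (q k j) := by
      apply aux_poly_eq_of_pos_real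
      intro s hs
      rw [Polynomial.eval_comp, Polynomial.eval_finset_sum]
      simp only [Polynomial.eval_mul, Polynomial.eval_C, Polynomial.eval_X]
      exact hmul t s ht hs i j
    have hcoeff := congrArg (fun p => Polynomial.coeff p l) hpoly
    simp only [aux_coeff_comp_C_mul_X, Polynomial.finset_sum_coeff,
      Polynomial.coeff_C_mul] at hcoeff
    exact hcoeff.symm
  -- second coefficient extraction: orthogonal idempotents
  have stepB : ∀ (m l : ℕ) (i j : Fin n),
      ∑ k, (q i k).coeff m * (q k j).coeff l = if m = l then (q i j).coeff l else 0 := by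
    intro m l i j
    have hpoly : (∑ k, (q i k) * Polynomial.C ((q k j).coeff l))
        = Polynomial.C ((q i j).coeff l) * Polynomial.X ^ l := by
      apply aux_poly_eq_of_pos_real
      intro t ht
      rw [Polynomial.eval_finset_sum]
      simp only [Polynomial.eval_mul, Polynomial.eval_C, Polynomial.eval_X, Polynomial.eval_pow]
      exact stepA l t ht i j
    have hcoeff := congrArg (fun p => Polynomial.coeff p m) hpoly
    simp only [Polynomial.finset_sum_coeff, Polynomial.coeff_mul_C, Polynomial.coeff_C_mul,
      Polynomial.coeff_X_pow] at hcoeff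
    rw [hcoeff]
    split_ifs <;> simp
  -- degree bound and resolution of identity
  obtain ⟨D, hD⟩ : ∃ D : ℕ, ∀ i j : Fin n, (q i j).natDegree < D :=
    ⟨(Finset.univ.sup fun p : Fin n × Fin n => (q p.1 p.2).natDegree) + 1,
     fun i j => Nat.lt_succ_of_le
       (Finset.le_sup (f := fun p : Fin n × Fin n => (q p.1 p.2).natDegree)
         (Finset.mem_univ (i,j)))⟩
  have hsum1 : ∀ i j : Fin n, ∑ m ∈ Finset.range D, (q i j).coeff m
      = if i = j then (1:ℂ) else 0 := by
    intro i j
    have he := Polynomial.eval_eq_sum_range' (hD i j) (1:ℂ)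
    simp only [one_pow, mul_one] at he
    rw [← he, hone i j]
  obtain ⟨cEnd, hc⟩ : ∃ cEnd : ℕ → (V →ₗ[ℂ] V), ∀ m, LinearMap.toMatrix b b (cEnd m)
      = Matrix.of (fun i j => (q i j).coeff m) :=
    ⟨fun m => Matrix.toLin b b (Matrix.of (fun i j => (q i j).coeff m)),
     fun m => LinearMap.toMatrix_toLin b b _⟩
  have hid : ∑ m ∈ Finset.range D, cEnd m = LinearMap.id := by
    apply (LinearMap.toMatrix b b).injective
    rw [map_sum, LinearMap.toMatrix_id]
    ext i j
    rw [Matrix.sum_apply]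
    simp only [hc, Matrix.of_apply]
    rw [hsum1 i j, Matrix.one_apply]
  have hvsum : ∀ v : V, v = ∑ m ∈ Finset.range D, cEnd m v := by
    intro v
    conv_lhs => rw [← LinearMap.id_apply (R := ℂ) v, ← hid]
    rw [LinearMap.sum_apply]
  -- weight property of cEnd m
  have hw : ∀ (m : ℕ) (u : ℂˣ) (t : ℝ), 0 < t → (u:ℂ) = (t:ℂ) →
      (h u : V →ₗ[ℂ] V) * cEnd m = ((t:ℂ)^((m:ℤ) - 2*(N:ℤ))) • cEnd m := by
    intro m u t ht hu
    have hnt : ((t:ℂ)) ≠ 0 := Complex.ofReal_ne_zero.mpr ht.ne'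
    apply (LinearMap.toMatrix b b).injective
    rw [LinearMap.toMatrix_mul, map_smul, hc]
    ext i j
    rw [Matrix.mul_apply, Matrix.smul_apply]
    simp only [hA u t ht hu, Matrix.of_apply, smul_eq_mul]
    have : ∑ k, (q i k).eval (t:ℂ) * ((t:ℂ)*(t:ℂ))^(-(N:ℤ)) * (q k j).coeff m
        = (∑ k, (q i k).eval (t:ℂ) * (q k j).coeff m) * ((t:ℂ)*(t:ℂ))^(-(N:ℤ)) := by
      rw [Finset.sum_mul]
      exact Finset.sum_congr rfl fun k _ => by ring
    rw [this, stepA m t ht i j]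
    have hzp : ((t:ℂ))^((m:ℤ) - 2*(N:ℤ)) = (t:ℂ)^m * ((t:ℂ)*(t:ℂ))^(-(N:ℤ)) := by
      rw [show (t:ℂ)*(t:ℂ) = (t:ℂ)^(2:ℤ) from (zpow_two _).symm, ← zpow_mul,
        ← zpow_natCast (t:ℂ) m, ← zpow_add₀ hnt]
      congr 1
      ring
    rw [hzp]; ring
  -- membership of cEnd m v in the weight space
  have hmem : ∀ (m : ℕ) (v : V), cEnd m v ∈ realWeightSpace h ((m:ℤ) - 2*(N:ℤ)) := by
    intro m v
    rw [realWeightSpace, Submodule.mem_iInf]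
    rintro ⟨u, t, ht, hu⟩
    rw [Module.End.mem_eigenspace_iff]
    have hcomp := congrArg (fun f : V →ₗ[ℂ] V => f v) (hw m u t ht hu)
    simp only [Module.End.mul_apply, LinearMap.smul_apply] at hcomp
    simpa only [hu] using hcomp
  -- decomposition of any vector
  have hvmem : ∀ v : V, ∀ S : Submodule ℂ V,
      (∀ m ∈ Finset.range D, cEnd m v ∈ S) → v ∈ S := by
    intro v S hS
    rw [hvsum v]
    exact Submodule.sum_mem S hS
  -- independence
  have hinj : Function.Injective fun k : ℤ => ((2:ℝ):ℂ)^k := by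
    intro a c hac
    have h2 : ((2:ℝ):ℂ)^a = ((2:ℝ):ℂ)^c := hac
    have h3 : ((2:ℝ))^a = (2:ℝ)^c := Complex.ofReal_injective (by exact_mod_cast h2)
    exact zpow_right_injective₀ (by norm_num) (by norm_num) h3
  have hu2ne : ((2:ℝ):ℂ) ≠ 0 := by norm_num
  have hle2 : ∀ k : ℤ, realWeightSpace h k ≤
      Module.End.eigenspace ((h (Units.mk0 ((2:ℝ):ℂ) hu2ne) : V →ₗ[ℂ] V)) (((2:ℝ):ℂ)^k) :=
    fun k => iInf_le
      (fun u : {u : ℂˣ // ∃ t : ℝ, 0 < t ∧ (u : ℂ) = (t : ℂ)} =>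
        Module.End.eigenspace ((h u : V →ₗ[ℂ] V)) (((u : ℂˣ) : ℂ) ^ k))
      ⟨Units.mk0 ((2:ℝ):ℂ) hu2ne, 2, two_pos, rfl⟩
  have hindep : iSupIndep (fun k : ℤ => realWeightSpace h k) := by
    have base := (Module.End.eigenspaces_iSupIndep
      ((h (Units.mk0 ((2:ℝ):ℂ) hu2ne) : V →ₗ[ℂ] V))).comp hinj
    exact base.mono hle2
  -- the sup is everything
  have htop : (⨆ k : ℤ, realWeightSpace h k) = ⊤ := by
    rw [eq_top_iff]
    intro v _
    exact hvmem v _ fun m _ =>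
      Submodule.mem_iSup_of_mem ((m:ℤ) - 2*(N:ℤ)) (hmem m v)
  -- finiteness
  have hfin : Set.Finite {k : ℤ | realWeightSpace h k ≠ ⊥} := by
    apply Set.Finite.subset
      (((Finset.range D).image (fun m : ℕ => (m:ℤ) - 2*(N:ℤ))).finite_toSet)
    intro k hk
    by_contra hknot
    apply hk
    rw [eq_bot_iff]
    intro v hv
    have hv2 : v ∈ ⨆ l, ⨆ (_ : l ≠ k), realWeightSpace h l := by
      apply hvmem v
      intro m hm
      have hne : (m:ℤ) - 2*(N:ℤ) ≠ k := by
        intro he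
        exact hknot (by
          simp only [Finset.coe_image, Set.mem_image, Finset.mem_coe]
          exact ⟨m, hm, he⟩)
      exact Submodule.mem_iSup_of_mem _ (Submodule.mem_iSup_of_mem hne (hmem m v))
    exact (Submodule.mem_bot ℂ).mpr (Submodule.disjoint_def.mp (hindep k) v hv hv2)
  -- invariance
  have hinv : ∀ (k : ℤ) (z : ℂˣ),
      Submodule.map ((h z : V →ₗ[ℂ] V)) (realWeightSpace h k) ≤ realWeightSpace h k := by
    intro k z w hw'
    rw [Submodule.mem_map] at hw'
    obtain ⟨v, hv, rfl⟩ := hw'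
    rw [realWeightSpace, Submodule.mem_iInf] at hv ⊢
    rintro ⟨u, t, ht, hu⟩
    have h1 := hv ⟨u, t, ht, hu⟩
    rw [Module.End.mem_eigenspace_iff] at h1 ⊢
    have hcomm : (h u : V →ₗ[ℂ] V) ((h z : V →ₗ[ℂ] V) v)
        = (h z : V →ₗ[ℂ] V) ((h u : V →ₗ[ℂ] V) v) := by
      rw [← Module.End.mul_apply, ← Module.End.mul_apply, ← Units.val_mul, ← Units.val_mul,
        ← map_mul, ← map_mul, mul_comm]
    rw [hcomm, h1, map_smul]
  exact ⟨hindep, htop, hfin, hinv⟩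
end

section
/- Let V be a finite-dimensional complex vector space and h : ℂˣ → GL(V) an algebraic representation. If v ∈ V is a nonzero simultaneous eigenvector of the family {h(z)}, i.e., there is a function λ : ℂˣ → ℂ with h(z) v = λ(z) • v for all z ∈ ℂˣ, then λ takes values in ℂˣ, is a group homomorphism, and there exist integers p, q such that λ(z) = z^p (conj z)^q for all z ∈ ℂˣ. In other words, the characters occurring in an algebraic representation of ℂˣ are exactly monomials in z and conj z. -/
open Polynomial

noncomputable section

lemma aux_eval_Q (Q : MvPolynomial (Fin 2) ℂ) (x y : ℂ) :
    MvPolynomial.eval ![x, y] Q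
      = ∑ m ∈ Q.support, Q.coeff m * x ^ m 0 * y ^ m 1 := by
  rw [MvPolynomial.eval_eq']
  refine Finset.sum_congr rfl fun m _ => ?_
  rw [Fin.prod_univ_two]
  simp [mul_assoc]

lemma aux_mult_extend (g : ℂ[X]) (S : Set ℂ) (hS : S.Infinite)
    (h : ∀ s ∈ S, ∀ t ∈ S, g.eval (s * t) = g.eval s * g.eval t) :
    ∀ s t : ℂ, g.eval (s * t) = g.eval s * g.eval t := by
  have step1 : ∀ s ∈ S, ∀ t : ℂ, g.eval (s * t) = g.eval s * g.eval t := by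
    intro s hs
    have hpoly : g.comp (C s * X) = C (g.eval s) * g := by
      apply Polynomial.eq_of_infinite_eval_eq
      apply hS.mono
      intro t ht
      simp only [Set.mem_setOf_eq, eval_comp, eval_mul, eval_C, eval_X]
      exact h s hs t ht
    intro t
    have := congrArg (eval t) hpoly
    simpa [eval_comp] using this
  intro s t
  have hpoly : g.comp (X * C t) = C (g.eval t) * g := by
    apply Polynomial.eq_of_infinite_eval_eq
    apply hS.mono
    intro s' hs'
    simp only [Set.mem_setOf_eq, eval_comp, eval_mul, eval_C, eval_X]
    rw [step1 s' hs' t, mul_comm]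
  have := congrArg (eval s) hpoly
  simp only [eval_comp, eval_mul, eval_C, eval_X] at this
  rw [this, mul_comm]

lemma aux_mult_pow (g : ℂ[X]) (h1 : g.eval 1 = 1)
    (h : ∀ s t : ℂ, g.eval (s * t) = g.eval s * g.eval t) :
    ∀ s : ℂ, s ≠ 0 → g.eval s = s ^ g.natDegree := by
  have hg0 : g ≠ 0 := fun hg => by simp [hg] at h1
  have hL : g.leadingCoeff ≠ 0 := leadingCoeff_ne_zero.mpr hg0
  intro s hs
  have hcomp : g.comp (C s * X) = C (g.eval s) * g := by
    apply Polynomial.funext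
    intro t
    simp [eval_comp, h]
  have hdeg : (C s * X).natDegree = 1 := by
    rw [natDegree_C_mul_X s hs]
  have hlc := congrArg leadingCoeff hcomp
  rw [Polynomial.leadingCoeff_comp (by rw [hdeg]; norm_num)] at hlc
  rw [leadingCoeff_mul, leadingCoeff_mul, leadingCoeff_C, leadingCoeff_X, mul_one,
    leadingCoeff_C] at hlc
  -- hlc : g.leadingCoeff * s ^ g.natDegree = g.eval s * g.leadingCoeff
  rw [mul_comm g.leadingCoeff _] at hlc
  exact (mul_right_cancel₀ hL hlc).symm

lemma aux_posreal_infinite : (Set.range (fun r : ℝ => (r : ℂ))).Infinite :=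
  Set.infinite_range_of_injective Complex.ofReal_injective

lemma aux_circle_infinite : {u : ℂ | u * (starRingEnd ℂ) u = 1}.Infinite := by
  refine Set.infinite_of_injective_forall_mem
    (f := fun t : ℝ => ((t : ℂ) + Complex.I) / ((t : ℂ) - Complex.I)) ?_ ?_
  · intro s t hst
    have hs : (s : ℂ) - Complex.I ≠ 0 := by
      intro h0
      have := congrArg Complex.im h0
      simp at this
    have ht : (t : ℂ) - Complex.I ≠ 0 := by
      intro h0
      have := congrArg Complex.im h0
      simp at this
    simp only at hst
    rw [div_eq_div_iff hs ht] at hst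
    have h2 : (2 * Complex.I) * s = (2 * Complex.I) * t := by linear_combination -hst
    have h3 : (s : ℂ) = t := mul_left_cancel₀ (by simp [Complex.I_ne_zero]) h2
    exact_mod_cast h3
  · intro t
    have hm : ((t : ℂ) - Complex.I) ≠ 0 := by
      intro h0; have := congrArg Complex.im h0; simp at this
    have hp : ((t : ℂ) + Complex.I) ≠ 0 := by
      intro h0; have := congrArg Complex.im h0; simp at this
    simp only [Set.mem_setOf_eq, map_div₀, map_add, map_sub, Complex.conj_ofReal, Complex.conj_I]
    field_simp
    rw [div_eq_iff (by rwa [sub_neg_eq_add])]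
    ring

lemma aux_posreal_infinite' : {x : ℂ | ∃ r : ℝ, 0 < r ∧ x = (r : ℂ)}.Infinite := by
  refine Set.infinite_of_injective_forall_mem (f := fun n : ℕ => ((n : ℝ) + 1 : ℂ)) ?_ ?_
  · intro a b hab
    simp only [Complex.ofReal_add, Complex.ofReal_natCast, Complex.ofReal_one,
      add_left_inj] at hab
    exact_mod_cast hab
  · intro n
    exact ⟨(n : ℝ) + 1, by positivity, by push_cast; ring⟩

lemma aux_main' (Q : MvPolynomial (Fin 2) ℂ) (N : ℕ) (f : ℂ → ℂ)
    (h1 : f 1 = 1)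
    (hmul : ∀ x y : ℂ, x ≠ 0 → y ≠ 0 → f (x * y) = f x * f y)
    (hQ : ∀ x : ℂ, x ≠ 0 → f x * (x * (starRingEnd ℂ) x) ^ N =
      MvPolynomial.eval ![x, (starRingEnd ℂ) x] Q) :
    ∃ p q : ℤ, ∀ x : ℂ, x ≠ 0 → f x = x ^ p * ((starRingEnd ℂ) x) ^ q := by
  classical
  have hSpos := aux_posreal_infinite'
  have hSc := aux_circle_infinite
  -- circle basics
  have hu0 : ∀ u ∈ {u : ℂ | u * (starRingEnd ℂ) u = 1}, u ≠ 0 := by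
    intro u hu h0
    rw [Set.mem_setOf_eq, h0] at hu
    simp at hu
  have hconj : ∀ u ∈ {u : ℂ | u * (starRingEnd ℂ) u = 1}, (starRingEnd ℂ) u = u⁻¹ := by
    intro u hu
    exact (inv_eq_of_mul_eq_one_right hu).symm
  -- the polynomial g on the positive real axis
  set g : ℂ[X] := ∑ m ∈ Q.support, C (Q.coeff m) * X ^ (m 0 + m 1) with hgdef
  have hgeval : ∀ x : ℂ, g.eval x = MvPolynomial.eval ![x, x] Q := by
    intro x
    rw [aux_eval_Q, hgdef, eval_finset_sum]
    refine Finset.sum_congr rfl fun m _ => ?_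
    simp [pow_add, mul_assoc]
  have hgQ : ∀ r : ℝ, 0 < r → g.eval (r : ℂ) = f (r : ℂ) * ((r : ℂ) * (r : ℂ)) ^ N := by
    intro r hr
    have hr0 : (r : ℂ) ≠ 0 := Complex.ofReal_ne_zero.mpr hr.ne'
    have := hQ (r : ℂ) hr0
    rw [Complex.conj_ofReal] at this
    rw [hgeval, ← this]
  have hg1 : g.eval 1 = 1 := by
    have := hgQ 1 one_pos
    simpa [h1] using this
  have hgmulS : ∀ s ∈ {x : ℂ | ∃ r : ℝ, 0 < r ∧ x = (r : ℂ)},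
      ∀ t ∈ {x : ℂ | ∃ r : ℝ, 0 < r ∧ x = (r : ℂ)},
      g.eval (s * t) = g.eval s * g.eval t := by
    rintro s ⟨r₁, hr₁, rfl⟩ t ⟨r₂, hr₂, rfl⟩
    have h10 : (r₁ : ℂ) ≠ 0 := Complex.ofReal_ne_zero.mpr hr₁.ne'
    have h20 : (r₂ : ℂ) ≠ 0 := Complex.ofReal_ne_zero.mpr hr₂.ne'
    have e12 : ((r₁ : ℂ) * r₂) = ((r₁ * r₂ : ℝ) : ℂ) := by push_cast; ring
    rw [e12, hgQ _ (mul_pos hr₁ hr₂), hgQ _ hr₁, hgQ _ hr₂]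
    push_cast
    rw [hmul _ _ h10 h20]
    ring
  have hgall := aux_mult_extend g _ hSpos hgmulS
  have hgpow := aux_mult_pow g hg1 hgall
  set d : ℕ := g.natDegree with hddef
  set a : ℤ := (d : ℤ) - 2 * N with hadef
  have hfpos : ∀ r : ℝ, 0 < r → f (r : ℂ) = (r : ℂ) ^ a := by
    intro r hr
    have hr0 : (r : ℂ) ≠ 0 := Complex.ofReal_ne_zero.mpr hr.ne'
    have e1 := hgQ r hr
    rw [hgpow _ hr0] at e1
    have e2 : ((r : ℂ) * (r : ℂ)) ^ N = (r : ℂ) ^ (2 * N) := by ring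
    rw [e2] at e1
    have hr2 : (r : ℂ) ^ (2 * N) ≠ 0 := pow_ne_zero _ hr0
    have ecast : (r : ℂ) ^ a = (r : ℂ) ^ d / (r : ℂ) ^ (2 * N) := by
      rw [hadef, zpow_sub₀ hr0, zpow_natCast]
      have e3 : (2 * (N : ℤ)) = ((2 * N : ℕ) : ℤ) := by push_cast; ring
      rw [e3, zpow_natCast]
    rw [ecast]
    field_simp
    linear_combination -e1
  -- circle polynomial G
  set M : ℕ := Q.totalDegree with hMdef
  have hm1 : ∀ m ∈ Q.support, m 1 ≤ M := by
    intro m hm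
    have h1' : (m.sum fun _ e => e) ≤ Q.totalDegree := MvPolynomial.le_totalDegree hm
    have h2' : (m.sum fun _ e => e) = m 0 + m 1 := by
      rw [Finsupp.sum_fintype _ _ (fun _ => rfl), Fin.sum_univ_two]
    omega
  set G : ℂ[X] := ∑ m ∈ Q.support, C (Q.coeff m) * X ^ (m 0 + (M - m 1)) with hGdef
  have hfSc : ∀ u ∈ {u : ℂ | u * (starRingEnd ℂ) u = 1},
      f u = MvPolynomial.eval ![u, (starRingEnd ℂ) u] Q := by
    intro u hu
    have e0 := hQ u (hu0 u hu)
    rw [Set.mem_setOf_eq] at hu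
    rwa [hu, one_pow, mul_one] at e0
  have hGeval : ∀ u ∈ {u : ℂ | u * (starRingEnd ℂ) u = 1},
      G.eval u = u ^ M * f u := by
    intro u hu
    have hu' := hu0 u hu
    rw [hfSc u hu, aux_eval_Q, hGdef, eval_finset_sum, Finset.mul_sum]
    refine Finset.sum_congr rfl fun m hm => ?_
    rw [hconj u hu, inv_pow]
    have e1 : u ^ (m 0 + (M - m 1)) * u ^ (m 1) = u ^ M * u ^ (m 0) := by
      rw [← pow_add, ← pow_add]
      congr 1
      have := hm1 m hm
      omega
    simp only [eval_mul, eval_C, eval_pow, eval_X]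
    have hpm : u ^ (m 1) ≠ 0 := pow_ne_zero _ hu'
    field_simp
    linear_combination (Q.coeff m) * e1
  have hG1 : G.eval 1 = 1 := by
    have h1c : (1 : ℂ) ∈ {u : ℂ | u * (starRingEnd ℂ) u = 1} := by simp
    rw [hGeval 1 h1c, h1]
    simp
  have hGmulS : ∀ s ∈ {u : ℂ | u * (starRingEnd ℂ) u = 1},
      ∀ t ∈ {u : ℂ | u * (starRingEnd ℂ) u = 1},
      G.eval (s * t) = G.eval s * G.eval t := by
    intro s hs t ht
    have hst : s * t ∈ {u : ℂ | u * (starRingEnd ℂ) u = 1} := by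
      have hs' := Set.mem_setOf_eq ▸ hs
      have ht' := Set.mem_setOf_eq ▸ ht
      rw [Set.mem_setOf_eq, map_mul]
      calc s * t * ((starRingEnd ℂ) s * (starRingEnd ℂ) t)
          = (s * (starRingEnd ℂ) s) * (t * (starRingEnd ℂ) t) := by ring
        _ = 1 := by rw [hs', ht', mul_one]
    rw [hGeval _ hst, hGeval _ hs, hGeval _ ht, hmul _ _ (hu0 _ hs) (hu0 _ ht), mul_pow]
    ring
  have hGall := aux_mult_extend G _ hSc hGmulS
  have hGpow := aux_mult_pow G hG1 hGall
  set e : ℕ := G.natDegree with hedef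
  set bb : ℤ := (e : ℤ) - M with hbbdef
  have hfcirc : ∀ u ∈ {u : ℂ | u * (starRingEnd ℂ) u = 1}, f u = u ^ bb := by
    intro u hu
    have hu' := hu0 u hu
    have e1 := hGeval u hu
    rw [hGpow _ hu'] at e1
    have e2 : u ^ bb = u ^ e / u ^ M := by
      rw [hbbdef, zpow_sub₀ hu', zpow_natCast, zpow_natCast]
    rw [e2, e1]
    field_simp
  -- ray identity
  have hray : ∀ u ∈ {u : ℂ | u * (starRingEnd ℂ) u = 1}, ∀ r : ℝ, 0 < r →
      MvPolynomial.eval ![(r:ℂ) * u, (r:ℂ) * (starRingEnd ℂ) u] Q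
        = (r:ℂ) ^ (d:ℕ) * u ^ bb := by
    intro u hu r hr
    have hu' := hu0 u hu
    have hr0 : (r : ℂ) ≠ 0 := Complex.ofReal_ne_zero.mpr hr.ne'
    have hx0 : (r:ℂ) * u ≠ 0 := mul_ne_zero hr0 hu'
    have hcx : (starRingEnd ℂ) ((r:ℂ) * u) = (r:ℂ) * (starRingEnd ℂ) u := by
      rw [map_mul, Complex.conj_ofReal]
    have e0 := hQ _ hx0
    rw [hcx] at e0
    have hu'' : u * (starRingEnd ℂ) u = 1 := hu
    have hmc : ((r:ℂ) * u) * ((r:ℂ) * (starRingEnd ℂ) u) = (r:ℂ) * (r:ℂ) := by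
      calc ((r:ℂ)*u) * ((r:ℂ)*(starRingEnd ℂ) u)
          = ((r:ℂ)*(r:ℂ)) * (u * (starRingEnd ℂ) u) := by ring
        _ = (r:ℂ)*(r:ℂ) := by rw [hu'', mul_one]
    rw [hmc] at e0
    rw [← e0, hmul _ _ hr0 hu', hfpos r hr, hfcirc u hu]
    have er : ((r:ℂ)*(r:ℂ))^N = (r:ℂ)^(2*N) := by ring
    rw [er]
    have e3 : (r:ℂ)^a * (r:ℂ)^(2*N) = (r:ℂ)^(d:ℕ) := by
      rw [← zpow_natCast (r:ℂ) (2*N), ← zpow_add₀ hr0, ← zpow_natCast (r:ℂ) d]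
      congr 1
      rw [hadef]; push_cast; ring
    calc (r:ℂ)^a * u^bb * ((r:ℂ)^(2*N)) = ((r:ℂ)^a * (r:ℂ)^(2*N)) * u^bb := by ring
      _ = (r:ℂ)^(d:ℕ) * u^bb := by rw [e3]
  -- coefficient identity on the circle
  have hpar : ∀ u ∈ {u : ℂ | u * (starRingEnd ℂ) u = 1},
      (∑ m ∈ Q.support, if m 0 + m 1 = d then
        Q.coeff m * u ^ (m 0) * ((starRingEnd ℂ) u) ^ (m 1) else 0) = u ^ bb := by
    intro u hu
    set B : ℂ[X] := ∑ m ∈ Q.support,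
      C (Q.coeff m * u ^ (m 0) * ((starRingEnd ℂ) u) ^ (m 1)) * X ^ (m 0 + m 1) with hBdef
    have hBeval : ∀ t : ℂ, B.eval t =
        MvPolynomial.eval ![t * u, t * (starRingEnd ℂ) u] Q := by
      intro t
      rw [aux_eval_Q, hBdef, eval_finset_sum]
      refine Finset.sum_congr rfl fun m _ => ?_
      simp only [eval_mul, eval_C, eval_pow, eval_X]
      rw [mul_pow, mul_pow, pow_add]
      ring
    have hBpoly : B = C (u ^ bb) * X ^ (d:ℕ) := by
      apply Polynomial.eq_of_infinite_eval_eq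
      apply hSpos.mono
      rintro x ⟨r, hr, rfl⟩
      simp only [Set.mem_setOf_eq, eval_mul, eval_C, eval_pow, eval_X]
      rw [hBeval, hray u hu r hr]
      ring
    have hc1 : B.coeff d = u ^ bb := by
      rw [hBpoly, coeff_C_mul, coeff_X_pow, if_pos rfl, mul_one]
    rw [← hc1, hBdef, finset_sum_coeff]
    refine Finset.sum_congr rfl fun m hm => ?_
    rw [coeff_C_mul, coeff_X_pow]
    by_cases hmd : m 0 + m 1 = d
    · rw [if_pos hmd, if_pos hmd.symm, mul_one]
    · rw [if_neg hmd, if_neg (fun hh => hmd hh.symm), mul_zero]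
  -- parity
  set K : ℕ := 2 * bb.natAbs with hKdef
  set nn : ℤ := (K : ℤ) + d + bb with hnndef
  have hnn0 : 0 ≤ nn := by rw [hnndef, hKdef]; omega
  set nt : ℕ := nn.toNat with hntdef
  have hntnn : (nt : ℤ) = nn := Int.toNat_of_nonneg hnn0
  set A : ℂ[X] := ∑ m ∈ Q.support,
    (if m 0 + m 1 = d then C (Q.coeff m) * X ^ (2 * m 0 + K) else 0) with hAdef
  have hAeval : ∀ u ∈ {u : ℂ | u * (starRingEnd ℂ) u = 1}, A.eval u = u ^ nt := by
    intro u hu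
    have hu' := hu0 u hu
    have e1 : u ^ (nt:ℕ) = u ^ (K + d) * u ^ bb := by
      rw [← zpow_natCast u nt, hntnn, hnndef, ← zpow_natCast u (K + d)]
      rw [← zpow_add₀ hu']
      congr 1
    rw [hAdef, eval_finset_sum, e1, ← hpar u hu, Finset.mul_sum]
    refine Finset.sum_congr rfl fun m hm => ?_
    by_cases hmd : m 0 + m 1 = d
    · rw [if_pos hmd, if_pos hmd]
      simp only [eval_mul, eval_C, eval_pow, eval_X]
      rw [hconj u hu, inv_pow]
      have e2 : u ^ (K + d) * u ^ (m 0) = u ^ (2 * m 0 + K) * u ^ (m 1) := by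
        rw [← pow_add, ← pow_add]
        congr 1
        omega
      have h3 : u ^ (m 1) ≠ 0 := pow_ne_zero _ hu'
      field_simp
      linear_combination (-(Q.coeff m)) * e2
    · rw [if_neg hmd, if_neg hmd]
      simp
  have hApoly : A = X ^ nt := by
    apply Polynomial.eq_of_infinite_eval_eq
    apply hSc.mono
    intro u hu
    simp only [Set.mem_setOf_eq, eval_pow, eval_X]
    exact hAeval u hu
  have hnteven : Even nt := by
    by_contra hodd
    have hzero : ∀ m ∈ Q.support,
        ((if m 0 + m 1 = d then C (Q.coeff m) * X ^ (2 * m 0 + K) else 0) : ℂ[X]).coeff nt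
          = 0 := by
      intro m hm
      by_cases hmd : m 0 + m 1 = d
      · rw [if_pos hmd, coeff_C_mul, coeff_X_pow, if_neg, mul_zero]
        intro hEq
        exact hodd ⟨m 0 + bb.natAbs, by omega⟩
      · rw [if_neg hmd, coeff_zero]
    have h1' : A.coeff nt = 1 := by rw [hApoly, coeff_X_pow, if_pos rfl]
    have h0' : A.coeff nt = 0 := by
      rw [hAdef, finset_sum_coeff]
      exact Finset.sum_eq_zero hzero
    exact zero_ne_one (h0'.symm.trans h1')
  have heven : ∃ k : ℤ, a - bb = 2 * k := by
    obtain ⟨t, ht⟩ := hnteven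
    exact ⟨(d:ℤ) - N - t + bb.natAbs, by omega⟩
  -- final assembly
  obtain ⟨k, hk⟩ := heven
  refine ⟨bb + k, k, ?_⟩
  intro x hx
  set r : ℝ := ‖x‖ with hrdef
  have hr : 0 < r := by
    rw [hrdef]
    exact norm_pos_iff.mpr hx
  have hr0 : (r:ℂ) ≠ 0 := Complex.ofReal_ne_zero.mpr hr.ne'
  set u : ℂ := x / (r:ℂ) with hudef
  have hu' : u ≠ 0 := div_ne_zero hx hr0
  have hu : u ∈ {u : ℂ | u * (starRingEnd ℂ) u = 1} := by
    rw [Set.mem_setOf_eq, hudef, map_div₀, Complex.conj_ofReal, div_mul_div_comm,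
      Complex.mul_conj]
    have hns : (Complex.normSq x : ℝ) = r * r := by
      rw [hrdef, Complex.normSq_eq_norm_sq]; ring
    rw [← Complex.ofReal_mul, ← hns]
    exact div_self (Complex.ofReal_ne_zero.mpr (Complex.normSq_pos.mpr hx).ne')
  have hx_eq : x = (r:ℂ) * u := by rw [hudef]; field_simp
  have hfx : f x = (r:ℂ)^a * u^bb := by
    rw [hx_eq, hmul _ _ hr0 hu', hfpos r hr, hfcirc u hu]
  have hcx : (starRingEnd ℂ) x = (r:ℂ) * u⁻¹ := by
    rw [hx_eq, map_mul, Complex.conj_ofReal, hconj u hu]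
  rw [hfx, hcx, hx_eq]
  rw [mul_zpow, mul_zpow, inv_zpow, ← zpow_neg]
  have er : ((r:ℂ))^(bb+k) * u^(bb+k) * ((r:ℂ)^k * u^(-k))
      = ((r:ℂ)^(bb+k) * (r:ℂ)^k) * (u^(bb+k) * u^(-k)) := by ring
  rw [er, ← zpow_add₀ hr0, ← zpow_add₀ hu']
  have e1 : bb + k + k = a := by omega
  have e2 : bb + k + -k = bb := by ring
  rw [e1, e2]


lemma aux_main (Q : MvPolynomial (Fin 2) ℂ) (N : ℕ) (lam : ℂˣ → ℂ)
    (h1 : lam 1 = 1) (hmul : ∀ z w : ℂˣ, lam (z * w) = lam z * lam w)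
    (hQ : ∀ z : ℂˣ, lam z * ((z : ℂ) * (starRingEnd ℂ) (z : ℂ)) ^ N =
      MvPolynomial.eval ![(z : ℂ), (starRingEnd ℂ) (z : ℂ)] Q) :
    ∃ p q : ℤ, ∀ z : ℂˣ, lam z = (z : ℂ) ^ p * ((starRingEnd ℂ) (z : ℂ)) ^ q := by
  classical
  set f : ℂ → ℂ := fun x => if hx : x = 0 then 0 else lam (Units.mk0 x hx) with hfdef
  have hfz : ∀ z : ℂˣ, f (z : ℂ) = lam z := by
    intro z
    rw [hfdef]
    simp only
    rw [dif_neg z.ne_zero]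
    congr 1
    exact Units.ext rfl
  have hf1 : f 1 = 1 := by
    have := hfz 1
    simpa [h1] using this
  have hfmul : ∀ x y : ℂ, x ≠ 0 → y ≠ 0 → f (x * y) = f x * f y := by
    intro x y hx hy
    have hxy : x * y ≠ 0 := mul_ne_zero hx hy
    have hmk : Units.mk0 (x * y) hxy = Units.mk0 x hx * Units.mk0 y hy := Units.ext rfl
    calc f (x * y) = lam (Units.mk0 (x * y) hxy) := hfz (Units.mk0 (x * y) hxy)
      _ = lam (Units.mk0 x hx * Units.mk0 y hy) := by rw [hmk]
      _ = lam (Units.mk0 x hx) * lam (Units.mk0 y hy) := hmul _ _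
      _ = f x * f y := by rw [← hfz (Units.mk0 x hx), ← hfz (Units.mk0 y hy)]; rfl
  have hfQ : ∀ x : ℂ, x ≠ 0 → f x * (x * (starRingEnd ℂ) x) ^ N =
      MvPolynomial.eval ![x, (starRingEnd ℂ) x] Q := by
    intro x hx
    have h' := hQ (Units.mk0 x hx)
    rw [← hfz (Units.mk0 x hx)] at h'
    exact h'
  obtain ⟨p, q, hpq⟩ := aux_main' Q N f hf1 hfmul hfQ
  refine ⟨p, q, fun z => ?_⟩
  rw [← hfz z]
  exact hpq _ z.ne_zero

theorem characters_of_algebraic_rep_are_monomial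
    (V : Type*) [AddCommGroup V] [Module ℂ V] [FiniteDimensional ℂ V]
    (h : ℂˣ →* (V →ₗ[ℂ] V)ˣ)
    (halg : IsAlgebraicRep h)
    (v : V) (hv : v ≠ 0)
    (lam : ℂˣ → ℂ)
    (heig : ∀ z : ℂˣ, (h z : V →ₗ[ℂ] V) v = lam z • v) :
    (∀ z : ℂˣ, lam z ≠ 0) ∧
    (lam 1 = 1) ∧
    (∀ z w : ℂˣ, lam (z * w) = lam z * lam w) ∧
    (∃ p q : ℤ, ∀ z : ℂˣ, lam z = (z : ℂ) ^ p * ((starRingEnd ℂ) (z : ℂ)) ^ q) := by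
  have hcan : ∀ a c : ℂ, a • v = c • v → a = c := by
    intro a c hac
    by_contra hne
    have h0 : (a - c) • v = 0 := by rw [sub_smul, hac, sub_self]
    rcases smul_eq_zero.mp h0 with h' | h'
    · exact hne (sub_eq_zero.mp h')
    · exact hv h'
  have h1 : lam 1 = 1 := by
    apply hcan
    have := heig 1
    rw [map_one] at this
    simpa using this.symm
  have hmul : ∀ z w : ℂˣ, lam (z * w) = lam z * lam w := by
    intro z w
    apply hcan
    have e1 := heig (z * w)
    rw [map_mul, Units.val_mul, Module.End.mul_apply, heig w, map_smul, heig z,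
      smul_smul] at e1
    rw [← e1, mul_comm (lam w)]
  have hne : ∀ z : ℂˣ, lam z ≠ 0 := by
    intro z
    have key : lam z * lam z⁻¹ = 1 := by
      rw [← hmul]
      simp [h1]
    exact left_ne_zero_of_mul_eq_one key
  obtain ⟨n, bV, N, P, hP⟩ := halg
  have hrv : bV.repr v ≠ 0 := fun h0 => hv ((LinearEquiv.map_eq_zero_iff bV.repr).mp h0)
  obtain ⟨i₀, hi₀⟩ := Finsupp.ne_iff.mp hrv
  simp only [Finsupp.coe_zero, Pi.zero_apply] at hi₀
  have hkey : ∀ z : ℂˣ,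
      ∑ j, LinearMap.toMatrix bV bV ((h z : V →ₗ[ℂ] V)) i₀ j * bV.repr v j
        = lam z * bV.repr v i₀ := by
    intro z
    have e := congrFun (LinearMap.toMatrix_mulVec_repr bV bV ((h z : V →ₗ[ℂ] V)) v) i₀
    rw [heig z, map_smul] at e
    simpa [Matrix.mulVec, dotProduct] using e
  set Q : MvPolynomial (Fin 2) ℂ :=
    ∑ j, MvPolynomial.C ((bV.repr v i₀)⁻¹ * bV.repr v j) * P i₀ j with hQdef
  have hQ : ∀ z : ℂˣ, lam z * ((z : ℂ) * (starRingEnd ℂ) (z : ℂ)) ^ N =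
      MvPolynomial.eval ![(z : ℂ), (starRingEnd ℂ) (z : ℂ)] Q := by
    intro z
    have hz0 : (z : ℂ) ≠ 0 := z.ne_zero
    have hcz0 : (starRingEnd ℂ) (z : ℂ) ≠ 0 := by
      intro hc
      exact hz0 ((starRingEnd ℂ).injective (by rw [hc, map_zero]))
    have hw0 : (z : ℂ) * (starRingEnd ℂ) (z : ℂ) ≠ 0 := mul_ne_zero hz0 hcz0
    have hk := hkey z
    simp only [hP] at hk
    rw [hQdef, map_sum]
    have expand : ∀ j, MvPolynomial.eval ![(z : ℂ), (starRingEnd ℂ) (z : ℂ)]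
        (MvPolynomial.C ((bV.repr v i₀)⁻¹ * bV.repr v j) * P i₀ j)
        = (bV.repr v i₀)⁻¹ * bV.repr v j *
          MvPolynomial.eval ![(z : ℂ), (starRingEnd ℂ) (z : ℂ)] (P i₀ j) := by
      intro j
      rw [map_mul, MvPolynomial.eval_C]
    rw [Finset.sum_congr rfl fun j _ => expand j]
    have hsum : ∑ j, MvPolynomial.eval ![(z : ℂ), (starRingEnd ℂ) (z : ℂ)] (P i₀ j)
        * bV.repr v j = lam z * bV.repr v i₀ * ((z : ℂ) * (starRingEnd ℂ) (z : ℂ)) ^ N := by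
      have e2 := congrArg (· * ((z : ℂ) * (starRingEnd ℂ) (z : ℂ)) ^ N) hk
      simp only [Finset.sum_mul] at e2
      rw [← e2]
      refine Finset.sum_congr rfl fun j _ => ?_
      rw [zpow_neg, zpow_natCast]
      field_simp
    calc lam z * ((z : ℂ) * (starRingEnd ℂ) (z : ℂ)) ^ N
        = (bV.repr v i₀)⁻¹ * (lam z * bV.repr v i₀ *
            ((z : ℂ) * (starRingEnd ℂ) (z : ℂ)) ^ N) := by
          field_simp
      _ = (bV.repr v i₀)⁻¹ * (∑ j, MvPolynomial.eval ![(z : ℂ), (starRingEnd ℂ) (z : ℂ)]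
            (P i₀ j) * bV.repr v j) := by rw [hsum]
      _ = ∑ j, (bV.repr v i₀)⁻¹ * bV.repr v j *
            MvPolynomial.eval ![(z : ℂ), (starRingEnd ℂ) (z : ℂ)] (P i₀ j) := by
          rw [Finset.mul_sum]
          exact Finset.sum_congr rfl fun j _ => by ring
  exact ⟨hne, h1, hmul, aux_main Q N lam h1 hmul hQ⟩

end
end
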